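/- arXiv:2411.18581 — 5 statements merged into one kernel-verified Lean document; each statement's English description precedes it below -/
import Mathlib

section
/- Let n = 2r ≥ 4 be even and let G be the cycle graph on vertices {1,…,n} with edges (i,i+1) for 1 ≤ i ≤ n−1 together with (n,1). Partition the edges as E_1 = {(i,i+1) : i odd} and E_2 = E ∖ E_1. If a sequence of matchings (M_1,…,M_k) with M_i ∩ M_{i+1} = ∅ for all 1 ≤ i < k solves the instance (G,C), then there exists an (E_1,E_2)-alternating sequence of matchings (M'_1,…,M'_{k+1}) — meaning M'_j ⊆ E_1 for odd j and M'_j ⊆ E_2 for even j — that also solves (G,C). -/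
/-- A matching of the graph `G`, encoded as an involution of the vertex set that
moves vertices only along edges of `G`. -/
def IsMatchingPerm {V : Type*} (G : SimpleGraph V) (m : V → V) : Prop :=
  Function.Involutive m ∧ ∀ v, m v = v ∨ G.Adj v (m v)

/-- The configuration obtained from `C` by applying the sequence of matchings
`ms = [M₁, …, M_k]` (with `M₁` applied first):  `M_k ⋯ M₁ C = C ∘ m₁ ∘ ⋯ ∘ m_k`,
where `(M C)(v) = C (m v)`. -/
def routeSeq {V : Type*} (C : V → V) (ms : List (V → V)) : V → V :=
  C ∘ ms.foldr (· ∘ ·) id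

/-- The sequence of matchings `ms = (M₁, …, M_k)` solves the instance `(G, C)`,
i.e. `M_k ⋯ M₁ C = Id`. -/
def Solves {V : Type*} (G : SimpleGraph V) (C : V → V) (ms : List (V → V)) : Prop :=
  (∀ m ∈ ms, IsMatchingPerm G m) ∧ routeSeq C ms = id

/-- The cycle graph on vertices `{0, …, n-1}` (representing `{1, …, n}`),
with edges `(i, i+1)` for `i < n-1` together with `(n-1, 0)`. -/
def cycleGraph (n : ℕ) : SimpleGraph (Fin n) :=
  SimpleGraph.fromRel fun i j => (i.val + 1) % n = j.val

/-- `m` is a matching contained in `E₁ = {(i, i+1) : i odd}` (1-indexed; 0-indexed the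
left endpoints are even). -/
def SubE1 (n : ℕ) (m : Fin n → Fin n) : Prop :=
  Function.Involutive m ∧ ∀ v : Fin n, m v = v ∨
    (v.val % 2 = 0 ∧ (m v).val = v.val + 1) ∨ ((m v).val % 2 = 0 ∧ v.val = (m v).val + 1)

/-- `m` is a matching contained in `E₂ = E ∖ E₁`, i.e. the edges `(i, i+1)` with `i` even
(1-indexed; 0-indexed the left endpoints are odd) together with the wrap edge `(n, 1)`
(0-indexed `(n-1, 0)`). -/
def SubE2 (n : ℕ) (m : Fin n → Fin n) : Prop :=
  Function.Involutive m ∧ ∀ v : Fin n, m v = v ∨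
    (v.val % 2 = 1 ∧ (m v).val = v.val + 1) ∨ ((m v).val % 2 = 1 ∧ v.val = (m v).val + 1) ∨
    (v.val = n - 1 ∧ (m v).val = 0) ∨ (v.val = 0 ∧ (m v).val = n - 1)

-- ########## auxiliary development ##########

def condb (n : ℕ) : Bool → ℕ → ℕ → Prop
  | true, a, c => (a % 2 = 0 ∧ c = a + 1) ∨ (c % 2 = 0 ∧ a = c + 1)
  | false, a, c => (a % 2 = 1 ∧ c = a + 1) ∨ (c % 2 = 1 ∧ a = c + 1) ∨
      (a = n - 1 ∧ c = 0) ∨ (a = 0 ∧ c = n - 1)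

def Subb (n : ℕ) : Bool → (Fin n → Fin n) → Prop
  | true => SubE1 n
  | false => SubE2 n

lemma subb_iff {n : ℕ} (b : Bool) (m : Fin n → Fin n) :
    Subb n b m ↔ Function.Involutive m ∧ ∀ v, m v = v ∨ condb n b v.val (m v).val := by
  cases b <;> rfl

lemma cond_symm {n : ℕ} {b : Bool} {a c : ℕ} (h : condb n b a c) : condb n b c a := by
  cases b <;> simp only [condb] at * <;> tauto

lemma cond_ne {n : ℕ} (hn : 4 ≤ n) {b : Bool} {a c : ℕ} (h : condb n b a c) : a ≠ c := by
  cases b <;> simp only [condb] at h <;> omega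

lemma cond_excl {n : ℕ} (hn : 4 ≤ n) {a c : ℕ} (ha : a < n) (hc : c < n)
    (h1 : condb n true a c) (h2 : condb n false a c) : False := by
  simp only [condb] at h1 h2; omega

lemma cond_cover {n : ℕ} (hn : 4 ≤ n) (he : n % 2 = 0) {a c : ℕ} (ha : a < n) (hc : c < n)
    (hne : a ≠ c) (hadj : (a + 1) % n = c ∨ (c + 1) % n = a) :
    condb n true a c ∨ condb n false a c := by
  have h1 : (a + 1) % n = if a + 1 = n then 0 else a + 1 := by
    split
    · simp [*]
    · exact Nat.mod_eq_of_lt (by omega)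
  have h2 : (c + 1) % n = if c + 1 = n then 0 else c + 1 := by
    split
    · simp [*]
    · exact Nat.mod_eq_of_lt (by omega)
  rw [h1, h2] at hadj
  simp only [condb]
  split at hadj <;> split at hadj <;> omega

lemma cond_unique {n : ℕ} (hn : 4 ≤ n) (he : n % 2 = 0) {b : Bool} {a c c' : ℕ}
    (hc : c < n) (hc' : c' < n)
    (h : condb n b a c) (h' : condb n b a c') : c = c' := by
  cases b <;> simp only [condb] at h h' <;> omega

open Classical in
noncomputable def splitb (n : ℕ) (b : Bool) (m : Fin n → Fin n) : Fin n → Fin n :=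
  fun v => if condb n b v.val ((m v).val) then m v else v

lemma splitb_cases {n : ℕ} (b : Bool) (m : Fin n → Fin n) (v : Fin n) :
    splitb n b m v = v ∨ (splitb n b m v = m v ∧ condb n b v.val (m v).val) := by
  unfold splitb; split
  · exact Or.inr ⟨rfl, ‹_›⟩
  · exact Or.inl rfl

lemma splitb_subb {n : ℕ} (b : Bool) {m : Fin n → Fin n} (hm : Function.Involutive m) :
    Subb n b (splitb n b m) := by
  rw [subb_iff]
  constructor
  · intro v
    rcases splitb_cases b m v with h | ⟨h, hc⟩
    · rw [h]; exact h
    · rw [h]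
      have hc' : condb n b (m v).val (m (m v)).val := by
        rw [hm v]; exact cond_symm hc
      unfold splitb
      rw [if_pos hc', hm v]
  · intro v
    rcases splitb_cases b m v with h | ⟨h, hc⟩
    · exact Or.inl h
    · right; rw [h]; exact hc

lemma subb_matching {n : ℕ} (hn : 4 ≤ n) {b : Bool} {m : Fin n → Fin n}
    (hm : Subb n b m) : IsMatchingPerm (cycleGraph n) m := by
  rw [subb_iff] at hm
  refine ⟨hm.1, fun v => ?_⟩
  rcases hm.2 v with h | h
  · exact Or.inl h
  · right
    rw [cycleGraph, SimpleGraph.fromRel_adj]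
    have hne : v.val ≠ (m v).val := cond_ne hn h
    refine ⟨fun he => hne (congrArg Fin.val he), ?_⟩
    have hv : v.val < n := v.isLt
    have hmv : (m v).val < n := (m v).isLt
    have e1 : (v.val + 1) % n = if v.val + 1 = n then 0 else v.val + 1 := by
      split
      · simp [*]
      · exact Nat.mod_eq_of_lt (by omega)
    have e2 : ((m v).val + 1) % n = if (m v).val + 1 = n then 0 else (m v).val + 1 := by
      split
      · simp [*]
      · exact Nat.mod_eq_of_lt (by omega)
    rw [e1, e2]
    cases b <;> simp only [condb] at h <;> split <;> split <;> omega

lemma splitb_comp {n : ℕ} (hn : 4 ≤ n) (he : n % 2 = 0) {m : Fin n → Fin n}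
    (hm : IsMatchingPerm (cycleGraph n) m) (b : Bool) :
    splitb n b m ∘ splitb n (!b) m = m := by
  obtain ⟨hinv, hadj⟩ := hm
  funext v
  simp only [Function.comp_apply]
  by_cases h : condb n (!b) v.val ((m v).val)
  · have h1 : splitb n (!b) m v = m v := by unfold splitb; rw [if_pos h]
    rw [h1]
    have h2 : ¬ condb n b (m v).val ((m (m v)).val) := by
      rw [hinv v]
      intro h2
      have h3 := cond_symm h2
      cases b
      · exact cond_excl hn v.isLt (m v).isLt (by simpa using h) h3
      · exact cond_excl hn v.isLt (m v).isLt h3 (by simpa using h)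
    unfold splitb; rw [if_neg h2]
  · have h1 : splitb n (!b) m v = v := by unfold splitb; rw [if_neg h]
    rw [h1]
    rcases hadj v with h2 | h2
    · have h3 : ¬ condb n b v.val ((m v).val) := by
        intro h3; exact cond_ne hn h3 (by rw [h2])
      unfold splitb; rw [if_neg h3, h2]
    · rw [cycleGraph, SimpleGraph.fromRel_adj] at h2
      have h4 : condb n true v.val (m v).val ∨ condb n false v.val (m v).val :=
        cond_cover hn he v.isLt (m v).isLt (fun hh => h2.1 (Fin.ext hh)) h2.2
      have h5 : condb n b v.val (m v).val := by
        cases b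
        · rcases h4 with h4 | h4
          · exact absurd h4 (by simpa using h)
          · exact h4
        · rcases h4 with h4 | h4
          · exact h4
          · exact absurd h4 (by simpa using h)
      unfold splitb; rw [if_pos h5]

-- disjoint supports of same-type parts of edge-disjoint matchings
lemma splitb_disj {n : ℕ} (hn : 4 ≤ n) (he : n % 2 = 0) (b : Bool) {m1 m2 : Fin n → Fin n}
    (hR : ∀ v, m1 v = v ∨ m2 v ≠ m1 v) (v : Fin n) :
    splitb n b m1 v = v ∨ splitb n b m2 v = v := by
  by_contra hcon
  push_neg at hcon
  obtain ⟨ha, hc⟩ := hcon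
  rcases splitb_cases b m1 v with h | ⟨h1, h1c⟩; · exact ha h
  rcases splitb_cases b m2 v with h | ⟨h2, h2c⟩; · exact hc h
  have heq : (m1 v).val = (m2 v).val :=
    cond_unique hn he (m1 v).isLt (m2 v).isLt h1c h2c
  have : m2 v = m1 v := Fin.ext heq.symm
  rcases hR v with h | h
  · exact ha (by rw [h1, h])
  · exact h this

noncomputable def comb {n : ℕ} (a c : Fin n → Fin n) : Fin n → Fin n :=
  fun v => if a v = v then c v else a v

lemma comb_comp {n : ℕ} {a c : Fin n → Fin n} (ha : Function.Involutive a)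
    (hc : Function.Involutive c) (hd : ∀ v, a v = v ∨ c v = v) :
    comb a c = a ∘ c := by
  funext v
  simp only [comb, Function.comp_apply]
  by_cases h : a v = v
  · rw [if_pos h]
    by_cases h2 : c v = v
    · rw [h2, h]
    · rcases hd (c v) with h3 | h3
      · exact h3.symm
      · exfalso; apply h2; rw [← h3]; exact hc v
  · rw [if_neg h]
    rcases hd v with h2 | h2
    · exact absurd h2 h
    · rw [h2]

lemma comb_invol {n : ℕ} {a c : Fin n → Fin n} (ha : Function.Involutive a)
    (hc : Function.Involutive c) (hd : ∀ v, a v = v ∨ c v = v) :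
    Function.Involutive (comb a c) := by
  intro v
  unfold comb
  by_cases h : a v = v
  · rw [if_pos h]
    by_cases h2 : c v = v
    · rw [h2, if_pos h, h2]
    · have h3 : a (c v) = c v := by
        rcases hd (c v) with h3 | h3
        · exact h3
        · exfalso; apply h2; have := hc v; rw [h3] at this; rw [this] at h3; exact h3
      rw [if_pos h3, hc v]
  · rw [if_neg h]
    have h3 : a (a v) = v := ha v
    have h4 : ¬ a (a v) = a v := by rw [h3]; exact fun he => h (he.symm)
    rw [if_neg h4, h3]

lemma comb_subb {n : ℕ} {b : Bool} {a c : Fin n → Fin n}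
    (hsa : Subb n b a) (hsc : Subb n b c) (hd : ∀ v, a v = v ∨ c v = v) :
    Subb n b (comb a c) := by
  rw [subb_iff] at hsa hsc ⊢
  refine ⟨comb_invol hsa.1 hsc.1 hd, fun v => ?_⟩
  simp only [comb]
  by_cases h : a v = v
  · rw [if_pos h]; exact hsc.2 v
  · rw [if_neg h]; exact hsa.2 v

-- the builder
noncomputable def buildL (n : ℕ) : Bool → (Fin n → Fin n) → List (Fin n → Fin n) →
    List (Fin n → Fin n)
  | b, mprev, [] => [splitb n b mprev]
  | b, mprev, m :: l => comb (splitb n b mprev) (splitb n b m) :: buildL n (!b) m l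

lemma buildL_length {n : ℕ} (b : Bool) (mprev : Fin n → Fin n)
    (l : List (Fin n → Fin n)) : (buildL n b mprev l).length = l.length + 1 := by
  induction l generalizing b mprev with
  | nil => rfl
  | cons m l ih => simp [buildL, ih]

def RDisj {n : ℕ} (a c : Fin n → Fin n) : Prop := ∀ v, a v = v ∨ c v ≠ a v

lemma buildL_foldr {n : ℕ} (hn : 4 ≤ n) (he : n % 2 = 0) (b : Bool)
    (mprev : Fin n → Fin n) (l : List (Fin n → Fin n))
    (hms : ∀ m ∈ mprev :: l, IsMatchingPerm (cycleGraph n) m)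
    (hch : List.Chain' RDisj (mprev :: l)) :
    (buildL n b mprev l).foldr (· ∘ ·) id = splitb n b mprev ∘ l.foldr (· ∘ ·) id := by
  induction l generalizing b mprev with
  | nil => simp [buildL]
  | cons m l ih =>
    have hmp : IsMatchingPerm (cycleGraph n) mprev := hms _ (by simp)
    have hm : IsMatchingPerm (cycleGraph n) m := hms _ (by simp)
    have hR : RDisj mprev m := (List.isChain_cons_cons.mp hch).1
    have hd : ∀ v, splitb n b mprev v = v ∨ splitb n b m v = v :=
      splitb_disj hn he b hR
    have hia : Function.Involutive (splitb n b mprev) :=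
      ((subb_iff _ _).mp (splitb_subb b hmp.1)).1
    have hic : Function.Involutive (splitb n b m) :=
      ((subb_iff _ _).mp (splitb_subb b hm.1)).1
    have ihh := ih (!b) m (fun x hx => hms x (by simp at hx ⊢; tauto))
      (List.isChain_cons_cons.mp hch).2
    show comb (splitb n b mprev) (splitb n b m) ∘ (buildL n (!b) m l).foldr (· ∘ ·) id = _
    rw [ihh, comb_comp hia hic hd]
    have key : splitb n b m ∘ splitb n (!b) m = m := splitb_comp hn he hm b
    calc (splitb n b mprev ∘ splitb n b m) ∘ (splitb n (!b) m ∘ l.foldr (· ∘ ·) id)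
        = splitb n b mprev ∘ ((splitb n b m ∘ splitb n (!b) m) ∘ l.foldr (· ∘ ·) id) := by
          simp [Function.comp_assoc]
      _ = splitb n b mprev ∘ (m :: l).foldr (· ∘ ·) id := by rw [key]; rfl

lemma buildL_get {n : ℕ} (hn : 4 ≤ n) (he : n % 2 = 0) (b : Bool) (mprev : Fin n → Fin n)
    (l : List (Fin n → Fin n))
    (hms : ∀ m ∈ mprev :: l, IsMatchingPerm (cycleGraph n) m)
    (hch : List.Chain' RDisj (mprev :: l)) :
    ∀ (i : ℕ) (h : i < (buildL n b mprev l).length),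
      Subb n (if i % 2 = 0 then b else !b) ((buildL n b mprev l)[i]) := by
  induction l generalizing b mprev with
  | nil =>
    intro i h
    simp [buildL] at h ⊢
    subst h
    simp only [Nat.zero_mod, if_pos rfl]
    exact splitb_subb b (hms _ (by simp)).1
  | cons m l ih =>
    intro i h
    have hmp : IsMatchingPerm (cycleGraph n) mprev := hms _ (by simp)
    have hm : IsMatchingPerm (cycleGraph n) m := hms _ (by simp)
    have hR : RDisj mprev m := (List.isChain_cons_cons.mp hch).1
    have hd : ∀ v, splitb n b mprev v = v ∨ splitb n b m v = v := splitb_disj hn he b hR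
    match i with
    | 0 =>
      show Subb n _ (comb (splitb n b mprev) (splitb n b m))
      simp only [Nat.zero_mod, if_pos rfl]
      exact comb_subb (splitb_subb b hmp.1) (splitb_subb b hm.1) hd
    | Nat.succ j =>
      have h' : j < (buildL n (!b) m l).length := by
        have := h
        simp only [buildL, List.length_cons] at this
        omega
      have := ih (!b) m (fun x hx => hms x (by simp at hx ⊢; tauto))
        (List.isChain_cons_cons.mp hch).2 j h'
      show Subb n _ ((buildL n (!b) m l)[j])
      rcases Nat.even_or_odd j with hj | hj
      · have hj0 : j % 2 = 0 := Nat.even_iff.mp hj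
        have hj1 : (j + 1) % 2 = 1 := by omega
        rw [hj1]; simp only [if_pos hj0] at this
        simpa using this
      · have hj0 : j % 2 = 1 := Nat.odd_iff.mp hj
        have hj1 : (j + 1) % 2 = 0 := by omega
        rw [hj1]; rw [if_neg (by omega)] at this
        simp only [Bool.not_not] at this
        simpa using this

/-- on the even cycle of length `n = 2r ≥ 4`, any solution `(M₁, …, M_k)` in
which consecutive matchings share no edge can be converted into an `(E₁, E₂)`-alternating
solution `(M'₁, …, M'_{k+1})` of length `k + 1`, where the matchings in odd positions are
subsets of `E₁` and those in even positions are subsets of `E₂`. -/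
theorem stmt_13 (n : ℕ) (hn : 4 ≤ n) (heven : Even n) (C : Fin n ≃ Fin n)
    (ms : List (Fin n → Fin n)) (hms : Solves (cycleGraph n) (⇑C) ms)
    (hdisj : ∀ (i : ℕ) (h : i + 1 < ms.length) (v : Fin n),
      (ms[i]'(by omega)) v = v ∨ (ms[i + 1]'h) v ≠ (ms[i]'(by omega)) v) :
    ∃ ms' : List (Fin n → Fin n),
      ms'.length = ms.length + 1 ∧
      Solves (cycleGraph n) (⇑C) ms' ∧
      ∀ j : Fin ms'.length,
        (j.val % 2 = 0 → SubE1 n (ms'.get j)) ∧ (j.val % 2 = 1 → SubE2 n (ms'.get j)) := by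
  have he : n % 2 = 0 := Nat.even_iff.mp heven
  cases ms with
  | nil =>
    refine ⟨[id], by simp, ⟨?_, ?_⟩, ?_⟩
    · intro x hx
      simp at hx
      subst hx
      exact ⟨fun v => rfl, fun v => Or.inl rfl⟩
    · have hC : (⇑C : Fin n → Fin n) = id := by
        have := hms.2
        simpa [routeSeq] using this
      simp [routeSeq, hC]
    · intro j
      have hj0 : j.val = 0 := Nat.lt_one_iff.mp (by simpa using j.isLt)
      constructor
      · intro _
        simp only [List.get_eq_getElem, hj0]
        exact ⟨fun v => rfl, fun v => Or.inl rfl⟩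
      · intro h
        rw [hj0] at h
        omega
  | cons m rest =>
    have hmats : ∀ x ∈ m :: rest, IsMatchingPerm (cycleGraph n) x := hms.1
    have hm : IsMatchingPerm (cycleGraph n) m := hmats _ (by simp)
    have hch : List.Chain' RDisj (m :: rest) := by
      rw [List.Chain', List.isChain_iff_getElem]
      intro i h
      intro v
      exact hdisj i (by simp at h ⊢; omega) v
    refine ⟨splitb n true m :: buildL n false m rest, ?_, ⟨?_, ?_⟩, ?_⟩
    · simp [buildL_length]
    · intro x hx
      rcases List.mem_cons.mp hx with hx | hx
      · subst hx
        exact subb_matching hn (b := true) (splitb_subb true hm.1)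
      · obtain ⟨i, hi, hxe⟩ := List.mem_iff_getElem.mp hx
        subst hxe
        exact subb_matching hn (buildL_get hn he false m rest hmats hch i hi)
    · have hf : (splitb n true m :: buildL n false m rest).foldr (· ∘ ·) id
          = (m :: rest).foldr (· ∘ ·) id := by
        show splitb n true m ∘ (buildL n false m rest).foldr (· ∘ ·) id
            = m ∘ rest.foldr (· ∘ ·) id
        rw [buildL_foldr hn he false m rest hmats hch]
        have key : splitb n true m ∘ splitb n false m = m := by
          simpa using splitb_comp hn he hm true
        rw [← Function.comp_assoc, key]
      rw [routeSeq, hf]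
      exact hms.2
    · intro j
      obtain ⟨jv, hj⟩ := j
      simp only [List.get_eq_getElem]
      match jv, hj with
      | 0, hj =>
        constructor
        · intro _
          exact splitb_subb (n := n) true hm.1
        · intro h
          omega
      | Nat.succ i, hj =>
        have hi : i < (buildL n false m rest).length := by
          simp only [List.length_cons] at hj
          omega
        have hs := buildL_get hn he false m rest hmats hch i hi
        have hget : (splitb n true m :: buildL n false m rest)[i + 1]'hj
            = (buildL n false m rest)[i] := by
          simp
        rw [hget]
        constructor
        · intro hp
          have hi1 : i % 2 = 1 := by omega
          rw [if_neg (by omega)] at hs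
          simpa [Subb] using hs
        · intro hp
          have hi0 : i % 2 = 0 := by omega
          rw [if_pos hi0] at hs
          exact hs
end

section
/- Let G be the 2×n grid graph with vertex set {(a,b) : a ∈ {1,2}, 1 ≤ b ≤ n}. Let A = {((1,b),(2,b)) : 1 ≤ b ≤ n} be the rung edges, let B = {((2,b),(2,b+1)) : b odd} ∪ {((1,b),(1,b+1)) : b even}, and let F_2 = E ∖ (A ∪ B) (so A ∪ B is a Hamiltonian path of G). Then for every matching M ⊆ F_2 and every configuration C on G, there exist matchings M_1 ⊆ A, M_2 ⊆ B, and M_3 ⊆ A such that M_3 M_2 M_1 C = M C. -/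
/-- The `2 × n` grid graph on vertices `Fin 2 × Fin n` (row, column; 0-indexed), with
edges between vertices at Euclidean distance 1. -/
def grid2 (n : ℕ) : SimpleGraph (Fin 2 × Fin n) :=
  SimpleGraph.fromRel fun u v =>
    (u.1 = v.1 ∧ u.2.val + 1 = v.2.val) ∨ (u.2 = v.2 ∧ u.1.val + 1 = v.1.val)

/-- `{u, v}` is a rung edge, i.e. lies in `A = {((1,b),(2,b)) : 1 ≤ b ≤ n}`. -/
def inA (n : ℕ) (u v : Fin 2 × Fin n) : Prop :=
  u.2 = v.2 ∧ u.1 ≠ v.1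

/-- The column `b` (0-indexed) at which row `a` (0-indexed) contributes a horizontal edge
`(b, b+1)` to `B`: 1-indexed, `B = {((2,b),(2,b+1)) : b odd} ∪ {((1,b),(1,b+1)) : b even}`. -/
def colB (a : Fin 2) (b : ℕ) : Prop :=
  (a.val = 1 ∧ b % 2 = 0) ∨ (a.val = 0 ∧ b % 2 = 1)

/-- `{u, v}` lies in `B`. -/
def inB (n : ℕ) (u v : Fin 2 × Fin n) : Prop :=
  u.1 = v.1 ∧ ((u.2.val + 1 = v.2.val ∧ colB u.1 u.2.val) ∨
               (v.2.val + 1 = u.2.val ∧ colB u.1 v.2.val))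

/-- `{u, v}` lies in `F₂ = E ∖ (A ∪ B)`, the remaining horizontal edges. -/
def inF2 (n : ℕ) (u v : Fin 2 × Fin n) : Prop :=
  u.1 = v.1 ∧ ((u.2.val + 1 = v.2.val ∧ ¬ colB u.1 u.2.val) ∨
               (v.2.val + 1 = u.2.val ∧ ¬ colB u.1 v.2.val))

/-- `m` is a matching contained in `A`. -/
def SubA (n : ℕ) (m : Fin 2 × Fin n → Fin 2 × Fin n) : Prop :=
  Function.Involutive m ∧ ∀ v, m v = v ∨ inA n v (m v)

/-- `m` is a matching contained in `B`. -/
def SubB (n : ℕ) (m : Fin 2 × Fin n → Fin 2 × Fin n) : Prop :=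
  Function.Involutive m ∧ ∀ v, m v = v ∨ inB n v (m v)

/-- `m` is a matching contained in `F₂`. -/
def SubF2 (n : ℕ) (m : Fin 2 × Fin n → Fin 2 × Fin n) : Prop :=
  Function.Involutive m ∧ ∀ v, m v = v ∨ inF2 n v (m v)

/-- on the `2 × n` grid, any matching `M ⊆ F₂` can be simulated by three
matchings `M₁ ⊆ A`, `M₂ ⊆ B`, `M₃ ⊆ A`: for every configuration `C`,
`M₃ M₂ M₁ C = M C`. -/
theorem stmt_15 (n : ℕ) (m : Fin 2 × Fin n → Fin 2 × Fin n) (hm : SubF2 n m)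
    (C : Fin 2 × Fin n ≃ Fin 2 × Fin n) :
    ∃ m₁ m₂ m₃ : Fin 2 × Fin n → Fin 2 × Fin n,
      SubA n m₁ ∧ SubB n m₂ ∧ SubA n m₃ ∧
      ⇑C ∘ m₁ ∘ m₂ ∘ m₃ = ⇑C ∘ m := by
  classical
  obtain ⟨hinv, hedge⟩ := hm
  set flip : Fin 2 → Fin 2 := fun a => 1 - a with hflipdef
  have hflipflip : ∀ a, flip (flip a) = a := by decide
  have hflipne : ∀ a, flip a ≠ a := by decide
  have hcolB : ∀ (a : Fin 2) (c : ℕ), ¬ colB (flip a) c ↔ colB a c := by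
    intro a c
    fin_cases a <;> simp [colB, flip] <;> omega
  set touched : Fin n → Prop := fun b => m (0, b) ≠ (0, b) ∨ m (1, b) ≠ (1, b)
    with htdef
  have htouch : ∀ v : Fin 2 × Fin n, m v ≠ v → touched v.2 := by
    rintro ⟨a, b⟩ h
    fin_cases a
    · exact Or.inl h
    · exact Or.inr h
  set s : Fin 2 × Fin n → Fin 2 × Fin n :=
    fun v => if touched v.2 then (flip v.1, v.2) else v with hsdef
  have hss : ∀ v, s (s v) = v := by
    intro v
    by_cases h : touched v.2
    · simp [hsdef, h, hflipflip]
    · simp [hsdef, h]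
  have hsA : SubA n s := by
    refine ⟨hss, fun v => ?_⟩
    by_cases h : touched v.2
    · right
      simp [hsdef, h, inA]
      exact fun he => hflipne v.1 he.symm
    · left; simp [hsdef, h]
  refine ⟨s, s ∘ m ∘ s, s, hsA, ?_, hsA, ?_⟩
  · constructor
    · intro v
      simp only [Function.comp_apply, hss]
      rw [hinv]
      exact hss v
    · intro v
      by_cases hv : m (s v) = s v
      · left
        simp only [Function.comp_apply, hv, hss]
      · right
        obtain ⟨heq, hadj⟩ := (hedge (s v)).resolve_left hv
        have htv : touched v.2 := by
          by_contra h
          exact hv (by simpa [hsdef, h] using htouch v (by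
            intro h'
            exact hv (by simp [hsdef, h, h'])))
        -- since touched v.2, s v = (flip v.1, v.2)
        have hsv : s v = (flip v.1, v.2) := by simp [hsdef, htv]
        have hmw : m (m (s v)) ≠ m (s v) := by
          rw [hinv]; exact fun h => hv h.symm
        have htw : touched (m (s v)).2 := htouch _ hmw
        have hsw : s (m (s v)) = (flip (m (s v)).1, (m (s v)).2) := by
          show (if touched (m (s v)).2 then _ else _) = _
          exact if_pos htw
        have h1 : (s (m (s v))).1 = v.1 := by
          rw [hsw]
          simp only
          rw [← heq, hsv]
          exact hflipflip v.1
        refine ⟨h1.symm, ?_⟩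
        have h2 : (s (m (s v))).2 = (m (s v)).2 := by rw [hsw]
        rw [Function.comp_apply, Function.comp_apply, h2]
        have hsv1 : (s v).1 = flip v.1 := by rw [hsv]
        have hsv2 : (s v).2 = v.2 := by rw [hsv]
        rw [hsv1, hsv2] at hadj
        rcases hadj with ⟨ha, hb⟩ | ⟨ha, hb⟩
        · exact Or.inl ⟨ha, (hcolB v.1 v.2.val).mp hb⟩
        · exact Or.inr ⟨ha, (hcolB v.1 (m (s v)).2.val).mp hb⟩
  · funext v
    simp only [Function.comp_apply, hss]
end

section
/- Let G be the h×n grid graph with h ≤ n, and let C be any configuration on G with maximum displacement d_max = max_v dist_G(v, C(v)). Then there exists a sequence of at most 2·d_max + 2h matchings solving the instance (G,C). In particular, since d_max ≤ OPT, there is always a solution of length at most 2·OPT + 2h. -/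
/-- The `h × n` grid graph on vertices `Fin h × Fin n` (row, column; 0-indexed), with
edges between vertices at Euclidean distance 1. -/
def gridGraph (h n : ℕ) : SimpleGraph (Fin h × Fin n) :=
  SimpleGraph.fromRel fun u v =>
    (u.1 = v.1 ∧ u.2.val + 1 = v.2.val) ∨ (u.2 = v.2 ∧ u.1.val + 1 = v.1.val)


namespace GridRoute


/-- Comparator step on value sequences supported on `[0,k)`, comparing pairs
`(p, p+1)` with `p % 2 = ρ`. -/
def cstep (k ρ : ℕ) (x : ℕ → ℕ) : ℕ → ℕ := fun p =>
  if p < k then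
    if p % 2 = ρ then (if p + 1 < k then min (x p) (x (p + 1)) else x p)
    else if p = 0 then x p else max (x (p - 1)) (x p)
  else x p

/-- The adjacent-swap involution realizing one comparator step on values `a`. -/
def mstep (k ρ : ℕ) (a : ℕ → ℕ) : ℕ → ℕ := fun p =>
  if p < k ∧ p % 2 = ρ ∧ p + 1 < k ∧ a (p + 1) < a p then p + 1
  else if 1 ≤ p ∧ p < k ∧ (p - 1) % 2 = ρ ∧ a p < a (p - 1) then p - 1
  else p

/-- A matching on the path with `k` vertices `0, …, k-1`. -/
def PathMatch (k : ℕ) (m : ℕ → ℕ) : Prop :=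
  Function.Involutive m ∧ (∀ p, m p = p ∨ m p = p + 1 ∨ p = m p + 1) ∧ ∀ p, k ≤ p → m p = p

lemma mstep_pathMatch (k ρ : ℕ) (a : ℕ → ℕ) : PathMatch k (mstep k ρ a) := by
  refine ⟨?_, ?_, ?_⟩
  · intro p
    unfold mstep
    by_cases h1 : p < k ∧ p % 2 = ρ ∧ p + 1 < k ∧ a (p + 1) < a p
    · rw [if_pos h1]
      have hn1 : ¬ ((p+1) < k ∧ (p+1) % 2 = ρ ∧ (p+1) + 1 < k ∧ a (p+1+1) < a (p+1)) := by
        rintro ⟨-, h, -, -⟩; omega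
      rw [if_neg hn1, if_pos ⟨by omega, by omega, by simpa using h1.2.1, by simpa using h1.2.2.2⟩]
      omega
    · rw [if_neg h1]
      by_cases h2 : 1 ≤ p ∧ p < k ∧ (p - 1) % 2 = ρ ∧ a p < a (p - 1)
      · rw [if_pos h2]
        rw [if_pos (show p - 1 < k ∧ (p-1) % 2 = ρ ∧ (p-1) + 1 < k ∧ a (p-1+1) < a (p-1) by
          refine ⟨by omega, h2.2.2.1, by omega, ?_⟩
          have : p - 1 + 1 = p := by omega
          rw [this]; exact h2.2.2.2)]
        omega
      · rw [if_neg h2, if_neg h1, if_neg h2]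
  · intro p
    unfold mstep
    by_cases h1 : p < k ∧ p % 2 = ρ ∧ p + 1 < k ∧ a (p + 1) < a p
    · rw [if_pos h1]; omega
    · rw [if_neg h1]
      by_cases h2 : 1 ≤ p ∧ p < k ∧ (p - 1) % 2 = ρ ∧ a p < a (p - 1)
      · rw [if_pos h2]; omega
      · rw [if_neg h2]; omega
  · intro p hp
    unfold mstep
    rw [if_neg (by omega), if_neg (by rintro ⟨-, h, -⟩; omega)]

lemma pathMatch_lt {k : ℕ} {m : ℕ → ℕ} (hm : PathMatch k m) {p : ℕ} (hp : p < k) :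
    m p < k := by
  obtain ⟨hinv, hadj, hfix⟩ := hm
  rcases hadj p with h | h | h
  · omega
  · by_contra hk
    have : m (p + 1) = p + 1 := hfix _ (by omega)
    have : m (m p) = p := hinv p
    rw [h] at this
    omega
  · omega

/-- The matching `mstep` realizes the comparator step, after any monotone relabeling. -/
lemma comp_mstep (k ρ : ℕ) (hρ : ρ < 2) (a f : ℕ → ℕ) (hf : Monotone f) :
    (f ∘ a) ∘ (mstep k ρ a) = cstep k ρ (f ∘ a) := by
  funext p
  unfold cstep mstep
  simp only [Function.comp_apply]
  by_cases hpk : p < k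
  · rw [if_pos hpk]
    by_cases hpar : p % 2 = ρ
    · rw [if_pos hpar]
      by_cases hpb : p + 1 < k
      · rw [if_pos hpb]
        by_cases hsw : a (p + 1) < a p
        · rw [if_pos ⟨hpk, hpar, hpb, hsw⟩]
          have : f (a (p+1)) ≤ f (a p) := hf (le_of_lt hsw)
          omega
        · rw [if_neg (by rintro ⟨-, -, -, h⟩; exact hsw h),
              if_neg (by rintro ⟨h0, -, hpar', -⟩; omega)]
          have : f (a p) ≤ f (a (p+1)) := hf (by omega)
          omega
      · rw [if_neg hpb,
            if_neg (by rintro ⟨-, -, h, -⟩; exact hpb h),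
            if_neg (by rintro ⟨h0, -, hpar', -⟩; omega)]
    · rw [if_neg hpar]
      by_cases hp0 : p = 0
      · rw [if_pos hp0,
            if_neg (by rintro ⟨-, h, -⟩; exact hpar h),
            if_neg (by rintro ⟨h, -⟩; omega)]
      · rw [if_neg hp0]
        have hpar' : (p - 1) % 2 = ρ := by omega
        by_cases hsw : a p < a (p - 1)
        · rw [if_neg (by rintro ⟨-, h, -⟩; exact hpar h),
              if_pos ⟨by omega, hpk, hpar', hsw⟩]
          have : f (a p) ≤ f (a (p-1)) := hf (le_of_lt hsw)
          omega
        · rw [if_neg (by rintro ⟨-, h, -⟩; exact hpar h),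
              if_neg (by rintro ⟨-, -, -, h⟩; exact hsw h)]
          have : f (a (p-1)) ≤ f (a p) := hf (by omega)
          omega
  · rw [if_neg hpk,
        if_neg (by rintro ⟨h, -⟩; exact hpk h),
        if_neg (by rintro ⟨-, h, -⟩; exact hpk h)]


/-- Number of zeros among positions `< q`. -/
def Z (x : ℕ → ℕ) (q : ℕ) : ℕ := ((Finset.range q).filter (fun p => x p = 0)).card

lemma Z_succ (x : ℕ → ℕ) (q : ℕ) :
    Z x (q + 1) = Z x q + (if x q = 0 then 1 else 0) := by
  unfold Z
  rw [Finset.range_add_one, Finset.filter_insert]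
  by_cases h : x q = 0
  · rw [if_pos h, if_pos h, Finset.card_insert_of_notMem (by simp)]
  · rw [if_neg h, if_neg h, Nat.add_zero]

lemma Z_le (x : ℕ → ℕ) (q : ℕ) : Z x q ≤ q := by
  calc Z x q ≤ (Finset.range q).card := Finset.card_filter_le _ _
  _ = q := Finset.card_range q

lemma Z_mono (x : ℕ → ℕ) {q q' : ℕ} (h : q ≤ q') : Z x q ≤ Z x q' :=
  Finset.card_le_card (Finset.filter_subset_filter _ (by simpa using h))

lemma Z_add_le (x : ℕ → ℕ) (q j : ℕ) : Z x (q + j) ≤ Z x q + j := by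
  induction j with
  | zero => simp
  | succ j ih =>
    rw [show q + (j+1) = (q + j) + 1 by omega, Z_succ]
    by_cases h : x (q + j) = 0 <;> simp [h] <;> omega

lemma Z_stable (x : ℕ → ℕ) (B j : ℕ) (h : ∀ p, B ≤ p → p < B + j → x p ≠ 0) :
    Z x (B + j) = Z x B := by
  induction j with
  | zero => rfl
  | succ j ih =>
    rw [show B + (j+1) = (B + j) + 1 by omega, Z_succ,
      if_neg (h _ (by omega) (by omega)), Nat.add_zero]
    exact ih (fun p h1 h2 => h p h1 (by omega))

lemma Z_full (x : ℕ → ℕ) (q : ℕ) (h : ∀ p, p < q → x p = 0) : Z x q = q := by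
  unfold Z
  rw [Finset.filter_true_of_mem (fun p hp => h p (Finset.mem_range.mp hp)), Finset.card_range]

lemma Z_full_iff (x : ℕ → ℕ) (q : ℕ) : Z x q = q ↔ ∀ p, p < q → x p = 0 := by
  constructor
  · intro h p hp
    by_contra hne
    have : (Finset.range q).filter (fun p => x p = 0) ⊆ (Finset.range q).erase p := by
      intro r hr
      simp only [Finset.mem_filter, Finset.mem_range] at hr
      exact Finset.mem_erase.mpr ⟨by rintro rfl; exact hne hr.2, Finset.mem_range.mpr hr.1⟩
    have hc := Finset.card_le_card this
    rw [Finset.card_erase_of_mem (Finset.mem_range.mpr hp), Finset.card_range] at hc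
    unfold Z at h
    omega
  · exact Z_full x q

/-- The invariant: each zero is either "final" or satisfies the deadline bound. -/
def INV (k ρ s : ℕ) (x : ℕ → ℕ) : Prop :=
  ∀ q, q < k → x q = 0 →
    Z x (q + 1) = q + 1 ∨
    q + Z x k + 1 + (if q % 2 = ρ then 1 else 0) ≤ s + 2 * Z x (q + 1)

lemma INV_mono {k ρ s s' : ℕ} {x : ℕ → ℕ} (h : s ≤ s') (hinv : INV k ρ s x) :
    INV k ρ s' x := by
  intro q hq hq0
  rcases hinv q hq hq0 with h1 | h2
  · exact Or.inl h1
  · exact Or.inr (by omega)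

lemma cstep_le_one {k ρ : ℕ} {x : ℕ → ℕ} (hx : ∀ p, p < k → x p ≤ 1) :
    ∀ p, p < k → cstep k ρ x p ≤ 1 := by
  intro p hp
  unfold cstep
  rw [if_pos hp]
  by_cases h1 : p % 2 = ρ
  · rw [if_pos h1]
    by_cases h2 : p + 1 < k
    · rw [if_pos h2]
      have := hx p hp
      have := hx (p+1) h2
      omega
    · rw [if_neg h2]; exact hx p hp
  · rw [if_neg h1]
    by_cases h2 : p = 0
    · rw [if_pos h2]; exact hx p hp
    · rw [if_neg h2]
      have := hx p hp
      have := hx (p-1) (by omega)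
      omega

/-- How the zero-count of a prefix changes under one comparator step. -/
lemma Z_cstep (k ρ : ℕ) (hρ : ρ < 2) (x : ℕ → ℕ) (hx : ∀ p, p < k → x p ≤ 1) :
    ∀ q, q ≤ k → Z (cstep k ρ x) q =
      Z x q + (if 1 ≤ q ∧ q < k ∧ (q - 1) % 2 = ρ ∧ x (q - 1) = 1 ∧ x q = 0 then 1 else 0) := by
  intro q
  induction q with
  | zero => intro _; simp [Z]
  | succ q ih =>
    intro hq1
    have hqk : q < k := by omega
    rw [Z_succ, Z_succ, ih (by omega)]
    have hxq := hx q hqk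
    -- value of cstep at q
    unfold cstep
    rw [if_pos hqk]
    by_cases hpar : q % 2 = ρ
    · rw [if_pos hpar]
      -- swapin q is zero since (q-1)%2 ≠ ρ or q = 0
      have hs0 : ¬ (1 ≤ q ∧ q < k ∧ (q - 1) % 2 = ρ ∧ x (q - 1) = 1 ∧ x q = 0) := by
        rintro ⟨h1, -, h2, -⟩; omega
      rw [if_neg hs0]
      by_cases hqb : q + 1 < k
      · rw [if_pos hqb]
        have hxq1 := hx (q+1) hqb
        have hs1cond : (1 ≤ q + 1 ∧ q + 1 < k ∧ (q + 1 - 1) % 2 = ρ ∧ x (q + 1 - 1) = 1 ∧ x (q+1) = 0)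
            ↔ (x q = 1 ∧ x (q+1) = 0) := by
          constructor
          · rintro ⟨-, -, -, h4, h5⟩; exact ⟨by simpa using h4, h5⟩
          · rintro ⟨h4, h5⟩; exact ⟨by omega, hqb, by simpa using hpar, by simpa using h4, h5⟩
        by_cases hc : x q = 1 ∧ x (q+1) = 0
        · rw [if_pos (hs1cond.mpr hc)]
          rw [if_pos (show min (x q) (x (q+1)) = 0 by omega), if_neg (by omega)]
        · rw [if_neg (fun h => hc (hs1cond.mp h))]
          by_cases hq0 : x q = 0
          · rw [if_pos (show min (x q) (x (q+1)) = 0 by omega), if_pos hq0]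
          · rw [if_neg (show ¬ min (x q) (x (q+1)) = 0 by omega), if_neg hq0]
      · rw [if_neg hqb, if_neg (show ¬ (1 ≤ q + 1 ∧ q + 1 < k ∧ (q + 1 - 1) % 2 = ρ ∧ x (q + 1 - 1) = 1 ∧ x (q+1) = 0) from by rintro ⟨-, h, -⟩; exact hqb h)]
        omega
    · rw [if_neg hpar]
      have hs1 : ¬ (1 ≤ q + 1 ∧ q + 1 < k ∧ (q + 1 - 1) % 2 = ρ ∧ x (q + 1 - 1) = 1 ∧ x (q+1) = 0) := by
        rintro ⟨-, -, h, -⟩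
        simp only [Nat.add_sub_cancel] at h
        exact hpar h
      rw [if_neg hs1]
      by_cases hq0 : q = 0
      · subst hq0
        rw [if_pos rfl, if_neg (show ¬ (1 ≤ 0 ∧ 0 < k ∧ (0 - 1) % 2 = ρ ∧ x (0 - 1) = 1 ∧ x 0 = 0) from by rintro ⟨h, -⟩; omega)]
        omega
      · rw [if_neg hq0]
        have hxq1 := hx (q-1) (by omega)
        have hparm : (q - 1) % 2 = ρ := by omega
        by_cases hc : x (q-1) = 1 ∧ x q = 0
        · rw [if_pos ⟨by omega, hqk, hparm, hc.1, hc.2⟩,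
            if_neg (show ¬ max (x (q-1)) (x q) = 0 by omega), if_pos hc.2]
        · rw [if_neg (by rintro ⟨-, -, -, h4, h5⟩; exact hc ⟨h4, h5⟩)]
          by_cases hb : max (x (q-1)) (x q) = 0
          · rw [if_pos hb, if_pos (by omega)]
          · rw [if_neg hb]
            by_cases hq0' : x q = 0
            · -- then x(q-1) = 1 (since max ≠ 0), so hc fails only if ... contradiction
              exfalso; exact hc ⟨by omega, hq0'⟩
            · rw [if_neg hq0']

lemma inv_step (k ρ s : ℕ) (hρ : ρ < 2) (x : ℕ → ℕ) (hx : ∀ p, p < k → x p ≤ 1)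
    (hinv : INV k ρ s x) (hs : 1 ≤ s) : INV k (1 - ρ) (s - 1) (cstep k ρ x) := by
  intro q hq hq0
  have hZk : Z (cstep k ρ x) k = Z x k := by
    rw [Z_cstep k ρ hρ x hx k le_rfl,
      if_neg (show ¬ (1 ≤ k ∧ k < k ∧ (k - 1) % 2 = ρ ∧ x (k - 1) = 1 ∧ x k = 0) from by
        rintro ⟨-, h, -⟩; omega), Nat.add_zero]
  have hZq1 := Z_cstep k ρ hρ x hx (q+1) (by omega)
  have hcq : cstep k ρ x q = 0 := hq0
  unfold cstep at hcq
  rw [if_pos hq] at hcq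
  have hxq := hx q hq
  by_cases hpar : q % 2 = ρ
  · rw [if_pos hpar] at hcq
    have hsw1 : ((q + 1 - 1) % 2 = ρ) := by simpa using hpar
    by_cases hqb : q + 1 < k
    · rw [if_pos hqb] at hcq
      have hxq1 := hx (q+1) hqb
      by_cases hxq0 : x q = 0
      · -- case B1 : the zero was already at q, misaligned this round
        have hZ' : Z (cstep k ρ x) (q+1) = Z x (q+1) := by
          rw [hZq1, if_neg (show ¬ (1 ≤ q + 1 ∧ q + 1 < k ∧ (q + 1 - 1) % 2 = ρ ∧
              x (q + 1 - 1) = 1 ∧ x (q+1) = 0) from by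
            rintro ⟨-, -, -, h4, -⟩; simp only [Nat.add_sub_cancel] at h4; omega), Nat.add_zero]
        rcases hinv q hq hxq0 with hfin | hterm
        · exact Or.inl (by rw [hZ']; exact hfin)
        · right
          rw [hZ', hZk, if_neg (show ¬ (q % 2 = 1 - ρ) from by omega)]
          rw [if_pos hpar] at hterm
          omega
      · -- case A : a zero moved from q+1 into q
        have hc : x q = 1 ∧ x (q+1) = 0 := by omega
        have hZ' : Z (cstep k ρ x) (q+1) = Z x (q+1) + 1 := by
          rw [hZq1, if_pos ⟨by omega, hqb, hsw1, by simpa using hc.1, hc.2⟩]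
        rcases hinv (q+1) hqb hc.2 with hfin1 | hterm1
        · exfalso
          have := (Z_full_iff x (q+2)).mp hfin1 q (by omega)
          omega
        · by_cases hnf : Z (cstep k ρ x) (q+1) = q + 1
          · exact Or.inl hnf
          · right
            rw [if_neg (show ¬ ((q+1) % 2 = ρ) from by omega)] at hterm1
            rw [show q + 1 + 1 = q + 2 from by omega] at hterm1
            have hZ2 : Z x (q+2) = Z x (q+1) + 1 := by
              rw [show q + 2 = (q+1) + 1 from rfl, Z_succ, if_pos hc.2]
            rw [hZ', hZk, if_neg (show ¬ (q % 2 = 1 - ρ) from by omega)]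
            omega
    · -- boundary: x' q = x q = 0, misaligned-style
      rw [if_neg hqb] at hcq
      have hZ' : Z (cstep k ρ x) (q+1) = Z x (q+1) := by
        rw [hZq1, if_neg (show ¬ (1 ≤ q + 1 ∧ q + 1 < k ∧ (q + 1 - 1) % 2 = ρ ∧
            x (q + 1 - 1) = 1 ∧ x (q+1) = 0) from by rintro ⟨-, h, -⟩; omega), Nat.add_zero]
      rcases hinv q hq hcq with hfin | hterm
      · exact Or.inl (by rw [hZ']; exact hfin)
      · right
        rw [hZ', hZk, if_neg (show ¬ (q % 2 = 1 - ρ) from by omega)]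
        rw [if_pos hpar] at hterm
        omega
  · rw [if_neg hpar] at hcq
    have hsw0 : ¬ (1 ≤ q + 1 ∧ q + 1 < k ∧ (q + 1 - 1) % 2 = ρ ∧
        x (q + 1 - 1) = 1 ∧ x (q+1) = 0) := by
      rintro ⟨-, -, h3, -⟩
      simp only [Nat.add_sub_cancel] at h3
      exact hpar h3
    have hZ' : Z (cstep k ρ x) (q+1) = Z x (q+1) := by rw [hZq1, if_neg hsw0, Nat.add_zero]
    by_cases hq00 : q = 0
    · subst hq00
      rw [if_pos rfl] at hcq
      left
      rw [hZ', Z_succ, if_pos hcq]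
      simp [Z]
    · rw [if_neg hq00] at hcq
      have hxqm := hx (q-1) (by omega)
      have hboth : x (q-1) = 0 ∧ x q = 0 := by omega
      by_cases hfin : Z x (q+1) = q + 1
      · exact Or.inl (by rw [hZ']; exact hfin)
      · right
        have hZq : Z x (q+1) = Z x q + 1 := by rw [Z_succ, if_pos hboth.2]
        rcases hinv (q-1) (by omega) hboth.1 with hffin | hfterm
        · exfalso
          rw [show q - 1 + 1 = q from by omega] at hffin
          omega
        · rw [show q - 1 + 1 = q from by omega] at hfterm
          rw [if_pos (show (q-1) % 2 = ρ from by omega)] at hfterm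
          rw [hZ', hZk, if_pos (show q % 2 = 1 - ρ from by omega)]
          omega

lemma inv_initial (k ρ A B : ℕ) (x : ℕ → ℕ) (hx : ∀ p, p < k → x p ≤ 1)
    (hB : B ≤ k)
    (h1 : ∀ p, p < k → x p = 1 → A ≤ p) (h0 : ∀ p, p < k → x p = 0 → p < B) :
    INV k ρ (B - A) x := by
  intro q hq hq0
  by_cases hfin : Z x (q+1) = q + 1
  · exact Or.inl hfin
  · right
    have hqB : q < B := h0 q hq hq0
    have hAq : A ≤ q := by
      by_contra hlt
      exact hfin (Z_full x (q+1) (fun p hp => by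
        have hp1 := h1 p (by omega)
        have := hx p (by omega)
        omega))
    have hZA : Z x A = A := Z_full x A (fun p hp => by
      have hp1 := h1 p (by omega)
      have := hx p (by omega)
      omega)
    have hge : A + 1 ≤ Z x (q+1) := by
      have h1' : Z x (q+1) = Z x q + 1 := by rw [Z_succ, if_pos hq0]
      have := Z_mono x (show A ≤ q from hAq)
      omega
    have hZkB : Z x k = Z x B := by
      have := Z_stable x B (k - B) (fun p hp1 hp2 => by
        intro hp0
        have := h0 p (by omega) hp0
        omega)
      rw [show B + (k - B) = k from by omega] at this
      exact this
    have hZB : Z x B ≤ Z x (q+1) + (B - (q+1)) := by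
      have := Z_add_le x (q+1) (B - (q+1))
      rw [show q + 1 + (B - (q+1)) = B from by omega] at this
      exact this
    have hpb : (if q % 2 = ρ then 1 else 0) ≤ 1 := by split <;> omega
    omega

lemma inv_final (k ρ : ℕ) (x : ℕ → ℕ) (hx : ∀ p, p < k → x p ≤ 1)
    (hinv : INV k ρ 0 x) : ∀ p, p + 1 < k → x p ≤ x (p+1) := by
  intro p hp
  by_cases hz : x (p+1) = 0
  · by_cases hfull : Z x (p+2) = p + 2
    · have := (Z_full_iff x (p+2)).mp hfull p (by omega)
      omega
    · rcases hinv (p+1) hp hz with hfin | hterm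
      · exfalso
        rw [show p + 1 + 1 = p + 2 from by omega] at hfin
        exact hfull hfin
      · exfalso
        rw [show p + 1 + 1 = p + 2 from by omega] at hterm
        have h1 : Z x (p+2) ≤ Z x k := Z_mono x (by omega)
        have h2 : Z x (p+2) ≤ p + 2 := Z_le x (p+2)
        have hpb : (0:ℕ) ≤ (if (p+1) % 2 = ρ then 1 else 0) := by omega
        omega
  · have := hx (p+1) hp
    have := hx p (by omega)
    omega

/-- Iterated comparator steps with alternating parity. -/
def iter (k : ℕ) : ℕ → ℕ → (ℕ → ℕ) → (ℕ → ℕ)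
  | 0, _, x => x
  | t+1, ρ, x => iter k t (1 - ρ) (cstep k ρ x)

lemma iter_sorted (k : ℕ) : ∀ (s ρ : ℕ) (x : ℕ → ℕ), ρ < 2 → (∀ p, p < k → x p ≤ 1) →
    INV k ρ s x → ∀ p, p + 1 < k → iter k s ρ x p ≤ iter k s ρ x (p+1) := by
  intro s
  induction s with
  | zero => intro ρ x hρ hx hinv p hp; exact inv_final k ρ x hx hinv p hp
  | succ s ih =>
    intro ρ x hρ hx hinv p hp
    have h1 : (1 - ρ) < 2 := by omega
    have h2 := cstep_le_one (k := k) (ρ := ρ) hx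
    have h3 := inv_step k ρ (s+1) hρ x hx hinv (by omega)
    simp only [Nat.add_sub_cancel] at h3
    exact ih (1-ρ) (cstep k ρ x) h1 h2 h3 p hp



/-- Adaptive odd-even routing schedule: `T` rounds starting with parity `ρ`. -/
def build (k : ℕ) : ℕ → ℕ → (ℕ → ℕ) → List (ℕ → ℕ)
  | 0, _, _ => []
  | T+1, ρ, a => mstep k ρ a :: build k T (1 - ρ) (a ∘ mstep k ρ a)

lemma build_length (k : ℕ) : ∀ (T ρ : ℕ) (a : ℕ → ℕ), (build k T ρ a).length = T := by
  intro T
  induction T with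
  | zero => intro ρ a; rfl
  | succ T ih => intro ρ a; simp [build, ih]

lemma build_pathMatch (k : ℕ) : ∀ (T ρ : ℕ) (a : ℕ → ℕ), ∀ m ∈ build k T ρ a, PathMatch k m := by
  intro T
  induction T with
  | zero => intro ρ a m hm; simp [build] at hm
  | succ T ih =>
    intro ρ a m hm
    rcases List.mem_cons.mp hm with h | h
    · subst h; exact mstep_pathMatch k ρ a
    · exact ih _ _ m h

lemma fold_lt {k : ℕ} : ∀ (ms : List (ℕ → ℕ)), (∀ m ∈ ms, PathMatch k m) →
    ∀ p, p < k → (ms.foldr (· ∘ ·) id) p < k := by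
  intro ms
  induction ms with
  | nil => intro _ p hp; simpa using hp
  | cons m rest ih =>
    intro hall p hp
    have h1 := ih (fun m' hm' => hall m' (List.mem_cons_of_mem _ hm')) p hp
    have h2 := hall m List.mem_cons_self
    simpa using pathMatch_lt h2 h1

lemma fold_inj {k : ℕ} : ∀ (ms : List (ℕ → ℕ)), (∀ m ∈ ms, PathMatch k m) →
    Function.Injective (ms.foldr (· ∘ ·) id) := by
  intro ms
  induction ms with
  | nil => intro _; exact fun a b h => h
  | cons m rest ih =>
    intro hall
    have h1 := ih (fun m' hm' => hall m' (List.mem_cons_of_mem _ hm'))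
    have h2 := (hall m List.mem_cons_self).1.injective
    simpa using h2.comp h1

lemma build_thresh (k : ℕ) : ∀ (T ρ : ℕ) (a f : ℕ → ℕ), ρ < 2 → Monotone f →
    (f ∘ a) ∘ ((build k T ρ a).foldr (· ∘ ·) id) = iter k T ρ (f ∘ a) := by
  intro T
  induction T with
  | zero => intro ρ a f _ _; rfl
  | succ T ih =>
    intro ρ a f hρ hf
    have step1 : f ∘ (a ∘ mstep k ρ a) = cstep k ρ (f ∘ a) := by
      rw [← Function.comp_assoc]
      exact comp_mstep k ρ hρ a f hf
    calc (f ∘ a) ∘ ((build k (T+1) ρ a).foldr (· ∘ ·) id)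
        = (f ∘ (a ∘ mstep k ρ a)) ∘ ((build k T (1-ρ) (a ∘ mstep k ρ a)).foldr (· ∘ ·) id) := rfl
      _ = iter k T (1-ρ) (f ∘ (a ∘ mstep k ρ a)) := ih (1-ρ) (a ∘ mstep k ρ a) f (by omega) hf
      _ = iter k T (1-ρ) (cstep k ρ (f ∘ a)) := by rw [step1]
      _ = iter k (T+1) ρ (f ∘ a) := rfl

/-- The path-routing engine: an injective target assignment `a` on the path `[0,k)`
with displacement at most `d` can be routed to the identity by `T ≥ min k 2d`
path matchings. -/
theorem engine (k d T : ℕ) (a : ℕ → ℕ)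
    (hvals : ∀ p, p < k → a p < k)
    (hinj : ∀ p, p < k → ∀ q, q < k → a p = a q → p = q)
    (hd : ∀ p, p < k → a p ≤ p + d ∧ p ≤ a p + d)
    (hT : min k (2*d) ≤ T) :
    ∃ ms : List (ℕ → ℕ), ms.length = T ∧ (∀ m ∈ ms, PathMatch k m) ∧
      ∀ p, p < k → a (ms.foldr (· ∘ ·) id p) = p := by
  refine ⟨build k T 0 a, build_length k T 0 a, build_pathMatch k T 0 a, ?_⟩
  set ms := build k T 0 a with hms
  set F := ms.foldr (· ∘ ·) id with hF
  have hallpm : ∀ m ∈ ms, PathMatch k m := build_pathMatch k T 0 a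
  have hFlt : ∀ p, p < k → F p < k := fold_lt ms hallpm
  have hFinj : Function.Injective F := fold_inj ms hallpm
  set b := a ∘ F with hb
  have hblt : ∀ p, p < k → b p < k := fun p hp => hvals _ (hFlt p hp)
  have hbinj : ∀ p, p < k → ∀ q, q < k → b p = b q → p = q := by
    intro p hp q hq hpq
    exact hFinj (hinj _ (hFlt p hp) _ (hFlt q hq) hpq)
  have hsorted : ∀ p, p + 1 < k → b p ≤ b (p+1) := by
    intro p hp
    by_contra hlt
    push_neg at hlt
    set θ := b p with hθ
    have hθk : θ < k := hblt p (by omega)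
    set f : ℕ → ℕ := fun v => if θ ≤ v then 1 else 0 with hf
    have hmono : Monotone f := by
      intro v w hvw
      simp only [hf]
      split <;> split <;> omega
    have hth := build_thresh k T 0 a f (by omega) hmono
    have hx01 : ∀ p', p' < k → (f ∘ a) p' ≤ 1 := by
      intro p' _
      simp only [hf, Function.comp_apply]
      split <;> omega
    have hinv0 : INV k 0 (min (θ + d) k - (θ - d)) (f ∘ a) := by
      apply inv_initial k 0 (θ - d) (min (θ + d) k) (f ∘ a) hx01 (min_le_right _ _)
      · intro p' hp' hfp
        simp only [hf, Function.comp_apply] at hfp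
        have := (hd p' hp').1
        by_cases hle : θ ≤ a p'
        · omega
        · rw [if_neg hle] at hfp; omega
      · intro p' hp' hfp
        simp only [hf, Function.comp_apply] at hfp
        have := (hd p' hp').2
        by_cases hle : θ ≤ a p'
        · rw [if_pos hle] at hfp; omega
        · push_neg at hle
          exact lt_min (by omega) hp'
    have hWT : min (θ + d) k - (θ - d) ≤ T := by
      have h1 := min_le_left (θ + d) k
      have h2 := min_le_right (θ + d) k
      have h3 := min_le_left k (2*d)
      have h4 := min_le_right k (2*d)
      rcases le_total (θ + d) k with h | h
      · rw [min_eq_left h]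
        rcases le_total k (2*d) with h' | h'
        · rw [min_eq_left h'] at hT; omega
        · rw [min_eq_right h'] at hT; omega
      · rw [min_eq_right h]
        rcases le_total k (2*d) with h' | h'
        · rw [min_eq_left h'] at hT; omega
        · rw [min_eq_right h'] at hT; omega
    have hinvT : INV k 0 T (f ∘ a) := INV_mono hWT hinv0
    have hiter := iter_sorted k T 0 (f ∘ a) (by omega) hx01 hinvT p hp
    rw [← hth] at hiter
    have e1 : ((f ∘ a) ∘ F) p = 1 := by
      simp only [hf, Function.comp_apply]
      rw [if_pos]
      rfl
    have e2 : ((f ∘ a) ∘ F) (p+1) = 0 := by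
      simp only [hf, Function.comp_apply]
      rw [if_neg]
      exact not_le.mpr hlt
    rw [e1, e2] at hiter
    omega
  have hge : ∀ p, p < k → p ≤ b p := by
    intro p
    induction p with
    | zero => omega
    | succ p ih =>
      intro hp
      have h1 := ih (by omega)
      have h2 := hsorted p (by omega)
      have h3 : b p ≠ b (p+1) := fun hh => by
        have := hbinj p (by omega) (p+1) (by omega) hh
        omega
      omega
  have hle : ∀ j p, p + j + 1 = k → b p ≤ p := by
    intro j
    induction j with
    | zero =>
      intro p hp
      have := hblt p (by omega)
      omega
    | succ j ih =>
      intro p hp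
      have h1 := ih (p+1) (by omega)
      have h2 := hsorted p (by omega)
      have h3 : b p ≠ b (p+1) := fun hh => by
        have := hbinj p (by omega) (p+1) (by omega) hh
        omega
      omega
  intro p hp
  have h1 := hge p hp
  have h2 := hle (k - p - 1) p (by omega)
  have : b p = p := by omega
  exact this



/-- Hall-type assignment: if all fibers of `f` and of `g` within `A` have size `m`,
there is a "round" assignment `φ : A → [0,m)` that is injective on each fiber of `f`
and on each fiber of `g`. -/
lemma hall_assign {α β : Type*} [DecidableEq α] [DecidableEq β] [Fintype α] [Fintype β]
    (m : ℕ) (f g : α → β) :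
    ∀ (A : Finset α),
    (∀ c, (A.filter (fun a => f a = c)).card = m) →
    (∀ c, (A.filter (fun a => g a = c)).card = m) →
    ∃ φ : α → ℕ, (∀ a ∈ A, φ a < m) ∧
      (∀ a ∈ A, ∀ a' ∈ A, φ a = φ a' → f a = f a' → a = a') ∧
      (∀ a ∈ A, ∀ a' ∈ A, φ a = φ a' → g a = g a' → a = a') := by
  induction m with
  | zero =>
    intro A hf _
    have hA : A = ∅ := by
      by_contra hne
      obtain ⟨a, ha⟩ := Finset.nonempty_iff_ne_empty.mpr hne
      have h1 := hf (f a)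
      have h2 : a ∈ A.filter (fun a' => f a' = f a) := Finset.mem_filter.mpr ⟨ha, rfl⟩
      rw [Finset.card_eq_zero] at h1
      rw [h1] at h2
      exact absurd h2 (Finset.notMem_empty a)
    subst hA
    exact ⟨fun _ => 0, by simp, by simp, by simp⟩
  | succ m ih =>
    intro A hf hg
    set t : β → Finset β := fun c => (A.filter (fun a => f a = c)).image g with ht
    have hall : ∀ S : Finset β, S.card ≤ (S.biUnion t).card := by
      intro S
      set P := A.filter (fun a => f a ∈ S) with hP
      set U := S.biUnion t with hU
      set Q := A.filter (fun a => g a ∈ U) with hQ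
      have hPcard : P.card = (m+1) * S.card := by
        have hdecomp : P = S.biUnion (fun c => A.filter (fun a => f a = c)) := by
          ext a
          simp only [hP, Finset.mem_filter, Finset.mem_biUnion]
          constructor
          · rintro ⟨ha, hfa⟩; exact ⟨f a, hfa, ha, rfl⟩
          · rintro ⟨c, hc, ha, rfl⟩; exact ⟨ha, hc⟩
        rw [hdecomp, Finset.card_biUnion]
        · rw [Finset.sum_congr rfl (fun c _ => hf c), Finset.sum_const, smul_eq_mul,
            Nat.mul_comm]
        · intro c1 _ c2 _ hne
          apply Finset.disjoint_filter_filter'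
          exact Set.disjoint_left.mpr (fun a h1 h2 => hne (h1 ▸ h2 ▸ rfl))
      have hQcard : Q.card = (m+1) * U.card := by
        have hdecomp : Q = U.biUnion (fun c => A.filter (fun a => g a = c)) := by
          ext a
          simp only [hQ, Finset.mem_filter, Finset.mem_biUnion]
          constructor
          · rintro ⟨ha, hga⟩; exact ⟨g a, hga, ha, rfl⟩
          · rintro ⟨c, hc, ha, rfl⟩; exact ⟨ha, hc⟩
        rw [hdecomp, Finset.card_biUnion]
        · rw [Finset.sum_congr rfl (fun c _ => hg c), Finset.sum_const, smul_eq_mul,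
            Nat.mul_comm]
        · intro c1 _ c2 _ hne
          apply Finset.disjoint_filter_filter'
          exact Set.disjoint_left.mpr (fun a h1 h2 => hne (h1 ▸ h2 ▸ rfl))
      have hsub : P ⊆ Q := by
        intro a ha
        rw [hP, Finset.mem_filter] at ha
        rw [hQ, Finset.mem_filter]
        refine ⟨ha.1, ?_⟩
        rw [hU]
        apply Finset.mem_biUnion.mpr
        exact ⟨f a, ha.2, Finset.mem_image.mpr ⟨a, Finset.mem_filter.mpr ⟨ha.1, rfl⟩, rfl⟩⟩
      have := Finset.card_le_card hsub
      rw [hPcard, hQcard] at this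
      exact Nat.le_of_mul_le_mul_left this (Nat.succ_pos m)
    obtain ⟨σ, hσinj, hσmem⟩ := (Finset.all_card_le_biUnion_card_iff_exists_injective t).mp hall
    have hrep : ∀ c : β, ∃ a : α, a ∈ A ∧ f a = c ∧ g a = σ c := by
      intro c
      have := hσmem c
      rw [ht] at this
      obtain ⟨a, ha, hga⟩ := Finset.mem_image.mp this
      rw [Finset.mem_filter] at ha
      exact ⟨a, ha.1, ha.2, hga⟩
    choose rep hrepA hrepf hrepg using hrep
    have hrepinj : Function.Injective rep := by
      intro c c' h
      have := hrepf c
      rw [h, hrepf c'] at this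
      exact this.symm
    set R : Finset α := Finset.univ.image rep with hR
    set A' := A \ R with hA'
    -- the f-fibers of A' have card m
    have hfR : ∀ c, A.filter (fun a => f a = c) ∩ R = {rep c} := by
      intro c
      ext x
      simp only [Finset.mem_inter, Finset.mem_filter, hR, Finset.mem_image,
        Finset.mem_singleton, Finset.mem_univ, true_and]
      constructor
      · rintro ⟨⟨hxA, hfx⟩, c', rfl⟩
        rw [hrepf c'] at hfx
        rw [hfx]
      · rintro rfl
        exact ⟨⟨hrepA c, hrepf c⟩, c, rfl⟩
    have hf' : ∀ c, (A'.filter (fun a => f a = c)).card = m := by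
      intro c
      have hset : A'.filter (fun a => f a = c) = (A.filter (fun a => f a = c)) \ {rep c} := by
        rw [hA']
        ext x
        simp only [Finset.mem_filter, Finset.mem_sdiff, Finset.mem_singleton]
        constructor
        · rintro ⟨⟨hxA, hxR⟩, hfx⟩
          refine ⟨⟨hxA, hfx⟩, ?_⟩
          rintro rfl
          exact hxR (by rw [hR]; exact Finset.mem_image.mpr ⟨c, Finset.mem_univ c, rfl⟩)
        · rintro ⟨⟨hxA, hfx⟩, hxrep⟩
          refine ⟨⟨hxA, ?_⟩, hfx⟩
          intro hxR
          rw [hR] at hxR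
          obtain ⟨c', -, rfl⟩ := Finset.mem_image.mp hxR
          rw [hrepf c'] at hfx
          subst hfx
          exact hxrep rfl
      rw [hset, Finset.card_sdiff_of_subset (by
        simp only [Finset.singleton_subset_iff, Finset.mem_filter]
        exact ⟨hrepA c, hrepf c⟩)]
      rw [hf c]
      simp
    have hgσ : Function.Surjective σ := Finite.surjective_of_injective hσinj
    have hg' : ∀ c, (A'.filter (fun a => g a = c)).card = m := by
      intro c
      obtain ⟨c0, rfl⟩ := hgσ c
      have hset : A'.filter (fun a => g a = σ c0) = (A.filter (fun a => g a = σ c0)) \ {rep c0} := by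
        rw [hA']
        ext x
        simp only [Finset.mem_filter, Finset.mem_sdiff, Finset.mem_singleton]
        constructor
        · rintro ⟨⟨hxA, hxR⟩, hgx⟩
          refine ⟨⟨hxA, hgx⟩, ?_⟩
          rintro rfl
          exact hxR (by rw [hR]; exact Finset.mem_image.mpr ⟨c0, Finset.mem_univ c0, rfl⟩)
        · rintro ⟨⟨hxA, hgx⟩, hxrep⟩
          refine ⟨⟨hxA, ?_⟩, hgx⟩
          intro hxR
          rw [hR] at hxR
          obtain ⟨c', -, rfl⟩ := Finset.mem_image.mp hxR
          rw [hrepg c'] at hgx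
          have : c' = c0 := hσinj hgx
          subst this
          exact hxrep rfl
      rw [hset, Finset.card_sdiff_of_subset (by
        simp only [Finset.singleton_subset_iff, Finset.mem_filter]
        exact ⟨hrepA c0, hrepg c0⟩)]
      rw [hg (σ c0)]
      simp
    obtain ⟨φ', hφ'lt, hφ'f, hφ'g⟩ := ih A' hf' hg'
    refine ⟨fun a => if a ∈ R then m else φ' a, ?_, ?_, ?_⟩
    · intro a haA
      dsimp only
      by_cases haR : a ∈ R
      · rw [if_pos haR]; omega
      · rw [if_neg haR]
        have := hφ'lt a (by rw [hA']; exact Finset.mem_sdiff.mpr ⟨haA, haR⟩)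
        omega
    · intro a haA a' haA' hφ hfa
      dsimp only at hφ
      by_cases haR : a ∈ R <;> by_cases haR' : a' ∈ R
      · rw [hR] at haR haR'
        obtain ⟨c, -, rfl⟩ := Finset.mem_image.mp haR
        obtain ⟨c', -, rfl⟩ := Finset.mem_image.mp haR'
        rw [hrepf c, hrepf c'] at hfa
        rw [hfa]
      · rw [if_pos haR, if_neg haR'] at hφ
        have := hφ'lt a' (by rw [hA']; exact Finset.mem_sdiff.mpr ⟨haA', haR'⟩)
        omega
      · rw [if_neg haR, if_pos haR'] at hφ
        have := hφ'lt a (by rw [hA']; exact Finset.mem_sdiff.mpr ⟨haA, haR⟩)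
        omega
      · rw [if_neg haR, if_neg haR'] at hφ
        exact hφ'f a (by rw [hA']; exact Finset.mem_sdiff.mpr ⟨haA, haR⟩)
          a' (by rw [hA']; exact Finset.mem_sdiff.mpr ⟨haA', haR'⟩) hφ hfa
    · intro a haA a' haA' hφ hga
      dsimp only at hφ
      by_cases haR : a ∈ R <;> by_cases haR' : a' ∈ R
      · rw [hR] at haR haR'
        obtain ⟨c, -, rfl⟩ := Finset.mem_image.mp haR
        obtain ⟨c', -, rfl⟩ := Finset.mem_image.mp haR'
        rw [hrepg c, hrepg c'] at hga
        rw [hσinj hga]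
      · rw [if_pos haR, if_neg haR'] at hφ
        have := hφ'lt a' (by rw [hA']; exact Finset.mem_sdiff.mpr ⟨haA', haR'⟩)
        omega
      · rw [if_neg haR, if_pos haR'] at hφ
        have := hφ'lt a (by rw [hA']; exact Finset.mem_sdiff.mpr ⟨haA, haR⟩)
        omega
      · rw [if_neg haR, if_neg haR'] at hφ
        exact hφ'g a (by rw [hA']; exact Finset.mem_sdiff.mpr ⟨haA, haR⟩)
          a' (by rw [hA']; exact Finset.mem_sdiff.mpr ⟨haA', haR'⟩) hφ hga

section Grid
variable {h n : ℕ}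

lemma grid_adj_col {r r' : Fin h} {c : Fin n} (hne : r ≠ r')
    (hrr : r.val + 1 = r'.val ∨ r'.val + 1 = r.val) :
    (gridGraph h n).Adj (r, c) (r', c) := by
  rw [gridGraph, SimpleGraph.fromRel_adj]
  constructor
  · simp only [ne_eq, Prod.mk.injEq]
    rintro ⟨h1, -⟩
    exact hne h1
  · rcases hrr with h1 | h1
    · exact Or.inl (Or.inr ⟨rfl, h1⟩)
    · exact Or.inr (Or.inr ⟨rfl, h1⟩)

lemma grid_adj_row {r : Fin h} {c c' : Fin n} (hne : c ≠ c')
    (hcc : c.val + 1 = c'.val ∨ c'.val + 1 = c.val) :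
    (gridGraph h n).Adj (r, c) (r, c') := by
  rw [gridGraph, SimpleGraph.fromRel_adj]
  constructor
  · simp only [ne_eq, Prod.mk.injEq]
    rintro ⟨-, h2⟩
    exact hne h2
  · rcases hcc with h1 | h1
    · exact Or.inl (Or.inl ⟨rfl, h1⟩)
    · exact Or.inr (Or.inl ⟨rfl, h1⟩)

lemma grid_adj_bound {u v : Fin h × Fin n} (huv : (gridGraph h n).Adj u v) :
    (u.2.val ≤ v.2.val + 1 ∧ v.2.val ≤ u.2.val + 1) := by
  rw [gridGraph, SimpleGraph.fromRel_adj] at huv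
  obtain ⟨-, hrel⟩ := huv
  rcases hrel with (⟨-, hc⟩ | ⟨hc, -⟩) | (⟨-, hc⟩ | ⟨hc, -⟩) <;>
    first
      | omega
      | (rw [hc]; omega)
      | (rw [← hc]; omega)

lemma walk_col_bound {u v : Fin h × Fin n} (p : (gridGraph h n).Walk u v) :
    u.2.val ≤ v.2.val + p.length ∧ v.2.val ≤ u.2.val + p.length := by
  induction p with
  | nil => simp
  | cons hadj p ih =>
    have := grid_adj_bound hadj
    simp only [SimpleGraph.Walk.length_cons]
    omega

lemma reach_row (r : Fin h) (c c' : Fin n) :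
    (gridGraph h n).Reachable (r, c) (r, c') := by
  have aux : ∀ (j : ℕ) (c c' : Fin n), c.val + j = c'.val →
      (gridGraph h n).Reachable (r, c) (r, c') := by
    intro j
    induction j with
    | zero =>
      intro c c' hcc
      have : c = c' := Fin.ext (by omega)
      subst this
      exact SimpleGraph.Reachable.refl _
    | succ j ih =>
      intro c c' hcc
      have hlt : c.val + 1 < n := by omega
      set c'' : Fin n := ⟨c.val + 1, hlt⟩ with hc''
      have h1 : (gridGraph h n).Adj (r, c) (r, c'') :=
        grid_adj_row (by intro hh; rw [hc''] at hh; have := congrArg Fin.val hh; simp at this)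
          (Or.inl rfl)
      exact h1.reachable.trans (ih c'' c' (by have hv : c''.val = c.val + 1 := rfl; omega))
  rcases le_total c.val c'.val with hcc | hcc
  · exact aux (c'.val - c.val) c c' (by omega)
  · exact (aux (c.val - c'.val) c' c (by omega)).symm

lemma reach_col (c : Fin n) (r r' : Fin h) :
    (gridGraph h n).Reachable (r, c) (r', c) := by
  have aux : ∀ (j : ℕ) (r r' : Fin h), r.val + j = r'.val →
      (gridGraph h n).Reachable (r, c) (r', c) := by
    intro j
    induction j with
    | zero =>
      intro r r' hrr
      have : r = r' := Fin.ext (by omega)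
      subst this
      exact SimpleGraph.Reachable.refl _
    | succ j ih =>
      intro r r' hrr
      have hlt : r.val + 1 < h := by omega
      set r'' : Fin h := ⟨r.val + 1, hlt⟩ with hr''
      have h1 : (gridGraph h n).Adj (r, c) (r'', c) :=
        grid_adj_col (by intro hh; rw [hr''] at hh; have := congrArg Fin.val hh; simp at this)
          (Or.inl rfl)
      exact h1.reachable.trans (ih r'' r' (by have hv : r''.val = r.val + 1 := rfl; omega))
  rcases le_total r.val r'.val with hrr | hrr
  · exact aux (r'.val - r.val) r r' (by omega)
  · exact (aux (r.val - r'.val) r' r (by omega)).symm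

lemma grid_reachable (u v : Fin h × Fin n) : (gridGraph h n).Reachable u v := by
  have h1 := reach_row u.1 u.2 v.2
  have h2 := reach_col v.2 u.1 v.1
  rw [show v = (v.1, v.2) from rfl]
  exact h1.trans h2

lemma col_le_dist (u v : Fin h × Fin n) :
    u.2.val ≤ v.2.val + (gridGraph h n).dist u v ∧
    v.2.val ≤ u.2.val + (gridGraph h n).dist u v := by
  obtain ⟨p, hp⟩ := (grid_reachable u v).exists_walk_length_eq_dist
  have := walk_col_bound p
  omega

/-- Apply a (column-indexed family of) path matchings inside every column. -/
def colStep (h n : ℕ) (M : Fin n → ℕ → ℕ) : Fin h × Fin n → Fin h × Fin n :=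
  fun v => (if hlt : M v.2 v.1.val < h then (⟨M v.2 v.1.val, hlt⟩ : Fin h) else v.1, v.2)

/-- Apply a (row-indexed family of) path matchings inside every row. -/
def rowStep (h n : ℕ) (M : Fin h → ℕ → ℕ) : Fin h × Fin n → Fin h × Fin n :=
  fun v => (v.1, if hlt : M v.1 v.2.val < n then (⟨M v.1 v.2.val, hlt⟩ : Fin n) else v.2)

lemma colStep_apply (M : Fin n → ℕ → ℕ) (v : Fin h × Fin n) (hlt : M v.2 v.1.val < h) :
    colStep h n M v = (⟨M v.2 v.1.val, hlt⟩, v.2) := by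
  rw [colStep, dif_pos hlt]

lemma rowStep_apply (M : Fin h → ℕ → ℕ) (v : Fin h × Fin n) (hlt : M v.1 v.2.val < n) :
    rowStep h n M v = (v.1, ⟨M v.1 v.2.val, hlt⟩) := by
  rw [rowStep, dif_pos hlt]

lemma colStep_matching (M : Fin n → ℕ → ℕ) (hM : ∀ c, PathMatch h (M c)) :
    IsMatchingPerm (gridGraph h n) (colStep h n M) := by
  constructor
  · intro v
    have h1 : M v.2 v.1.val < h := pathMatch_lt (hM v.2) v.1.isLt
    rw [colStep_apply M v h1]
    have h2 : M v.2 (M v.2 v.1.val) = v.1.val := (hM v.2).1 v.1.val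
    have h3 : M v.2 (M v.2 v.1.val) < h := by rw [h2]; exact v.1.isLt
    rw [colStep_apply M _ (by simpa using h3)]
    exact Prod.ext_iff.mpr ⟨Fin.ext (by simpa using h2), rfl⟩
  · intro v
    have h1 : M v.2 v.1.val < h := pathMatch_lt (hM v.2) v.1.isLt
    rw [colStep_apply M v h1]
    by_cases heq : M v.2 v.1.val = v.1.val
    · left
      exact Prod.ext_iff.mpr ⟨Fin.ext (by simpa using heq), rfl⟩
    · right
      have := (hM v.2).2.1 v.1.val
      conv_lhs => rw [show v = (v.1, v.2) from rfl]
      apply grid_adj_col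
      · intro hh
        exact heq (congrArg Fin.val hh).symm
      · have hval : ((⟨M v.2 v.1.val, h1⟩ : Fin h)).val = M v.2 v.1.val := rfl
        omega

lemma rowStep_matching (M : Fin h → ℕ → ℕ) (hM : ∀ r, PathMatch n (M r)) :
    IsMatchingPerm (gridGraph h n) (rowStep h n M) := by
  constructor
  · intro v
    have h1 : M v.1 v.2.val < n := pathMatch_lt (hM v.1) v.2.isLt
    rw [rowStep_apply M v h1]
    have h2 : M v.1 (M v.1 v.2.val) = v.2.val := (hM v.1).1 v.2.val
    have h3 : M v.1 (M v.1 v.2.val) < n := by rw [h2]; exact v.2.isLt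
    rw [rowStep_apply M _ (by simpa using h3)]
    exact Prod.ext_iff.mpr ⟨rfl, Fin.ext (by simpa using h2)⟩
  · intro v
    have h1 : M v.1 v.2.val < n := pathMatch_lt (hM v.1) v.2.isLt
    rw [rowStep_apply M v h1]
    by_cases heq : M v.1 v.2.val = v.2.val
    · left
      exact Prod.ext_iff.mpr ⟨rfl, Fin.ext (by simpa using heq)⟩
    · right
      have := (hM v.1).2.1 v.2.val
      conv_lhs => rw [show v = (v.1, v.2) from rfl]
      apply grid_adj_row
      · intro hh
        exact heq (congrArg Fin.val hh).symm
      · have hval : ((⟨M v.1 v.2.val, h1⟩ : Fin n)).val = M v.1 v.2.val := rfl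
        omega

end Grid

lemma foldr_comp_acc {α : Type*} (l : List (α → α)) (g : α → α) :
    l.foldr (· ∘ ·) g = l.foldr (· ∘ ·) id ∘ g := by
  induction l with
  | nil => rfl
  | cons m rest ih => simp only [List.foldr_cons, ih]; rfl

lemma foldr_comp_append {α : Type*} (l1 l2 : List (α → α)) :
    (l1 ++ l2).foldr (· ∘ ·) id = l1.foldr (· ∘ ·) id ∘ l2.foldr (· ∘ ·) id := by
  rw [List.foldr_append, foldr_comp_acc]

lemma getD_pathMatch {k : ℕ} {l : List (ℕ → ℕ)} (hpm : ∀ m ∈ l, PathMatch k m)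
    (t : ℕ) (ht : t < l.length) : PathMatch k (l.getD t id) := by
  rw [List.getD_eq_getElem l id ht]
  exact hpm _ (List.getElem_mem ht)

lemma getD_succ_tail {α : Type*} (l : List α) (i : ℕ) (d : α) (hl : l ≠ []) :
    l.getD (i + 1) d = l.tail.getD i d := by
  cases l with
  | nil => exact absurd rfl hl
  | cons a l' => rfl

lemma foldr_head_tail {α : Type*} (l : List (α → α)) (hl : l ≠ []) :
    l.foldr (· ∘ ·) id = l.getD 0 id ∘ l.tail.foldr (· ∘ ·) id := by
  cases l with
  | nil => exact absurd rfl hl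
  | cons a l' => rfl

lemma colFold {h n : ℕ} : ∀ (T : ℕ) (L : Fin n → List (ℕ → ℕ)),
    (∀ c, (L c).length = T) → (∀ c, ∀ m ∈ L c, PathMatch h m) →
    (List.ofFn (fun t : Fin T => colStep h n (fun c => (L c).getD t.val id))).foldr (· ∘ ·) id
      = colStep h n (fun c => (L c).foldr (· ∘ ·) id) := by
  intro T
  induction T with
  | zero =>
    intro L hlen _
    funext v
    have hnil : L v.2 = [] := List.length_eq_zero_iff.mp (hlen v.2)
    show v = colStep h n _ v
    rw [colStep]
    simp only [hnil, List.foldr_nil, id_eq]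
    rw [dif_pos v.1.isLt]
  | succ T ih =>
    intro L hlen hpm
    have hne : ∀ c, L c ≠ [] := fun c hh => by
      have := hlen c; rw [hh] at this; simp at this
    rw [List.ofFn_succ]
    have htail : (fun i : Fin T =>
          colStep h n (fun c => (L c).getD ((i.succ : Fin (T+1)) : ℕ) id))
        = (fun i : Fin T => colStep h n (fun c => ((L c).tail).getD i.val id)) := by
      funext i
      have hfc : (fun c => (L c).getD ((i.succ : Fin (T+1)) : ℕ) id)
          = (fun c => ((L c).tail).getD i.val id) := funext fun c => by
        rw [show ((i.succ : Fin (T+1)) : ℕ) = i.val + 1 from rfl, getD_succ_tail _ _ _ (hne c)]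
      rw [hfc]
    rw [htail, List.foldr_cons,
      ih (fun c => (L c).tail)
        (fun c => by have := hlen c; rw [List.length_tail]; omega)
        (fun c m hm => hpm c m (List.mem_of_mem_tail hm))]
    funext v
    simp only [Function.comp_apply]
    have hpmtail : ∀ c, ∀ m ∈ (L c).tail, PathMatch h m :=
      fun c m hm => hpm c m (List.mem_of_mem_tail hm)
    have h1 : (L v.2).tail.foldr (· ∘ ·) id v.1.val < h :=
      fold_lt _ (hpmtail v.2) _ v.1.isLt
    have hhead : PathMatch h ((L v.2).getD 0 id) :=
      getD_pathMatch (hpm v.2) 0 (by have := hlen v.2; omega)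
    have h2 : (L v.2).getD 0 id ((L v.2).tail.foldr (· ∘ ·) id v.1.val) < h :=
      pathMatch_lt hhead h1
    rw [colStep_apply (fun c => (L c).tail.foldr (· ∘ ·) id) v h1]
    rw [colStep_apply _ _ (show (L v.2).getD 0 id
        ((⟨(L v.2).tail.foldr (· ∘ ·) id v.1.val, h1⟩ : Fin h) : ℕ) < h from h2)]
    rw [colStep_apply _ _ (show (L v.2).foldr (· ∘ ·) id v.1.val < h from by
      rw [foldr_head_tail _ (hne v.2)]; exact h2)]
    refine Prod.ext_iff.mpr ⟨Fin.ext ?_, rfl⟩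
    show (L v.2).getD 0 id ((L v.2).tail.foldr (· ∘ ·) id v.1.val)
      = (L v.2).foldr (· ∘ ·) id v.1.val
    rw [foldr_head_tail _ (hne v.2)]
    rfl

lemma rowFold {h n : ℕ} : ∀ (T : ℕ) (L : Fin h → List (ℕ → ℕ)),
    (∀ r, (L r).length = T) → (∀ r, ∀ m ∈ L r, PathMatch n m) →
    (List.ofFn (fun t : Fin T => rowStep h n (fun r => (L r).getD t.val id))).foldr (· ∘ ·) id
      = rowStep h n (fun r => (L r).foldr (· ∘ ·) id) := by
  intro T
  induction T with
  | zero =>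
    intro L hlen _
    funext v
    have hnil : L v.1 = [] := List.length_eq_zero_iff.mp (hlen v.1)
    show v = rowStep h n _ v
    rw [rowStep]
    simp only [hnil, List.foldr_nil, id_eq]
    rw [dif_pos v.2.isLt]
  | succ T ih =>
    intro L hlen hpm
    have hne : ∀ r, L r ≠ [] := fun r hh => by
      have := hlen r; rw [hh] at this; simp at this
    rw [List.ofFn_succ]
    have htail : (fun i : Fin T =>
          rowStep h n (fun r => (L r).getD ((i.succ : Fin (T+1)) : ℕ) id))
        = (fun i : Fin T => rowStep h n (fun r => ((L r).tail).getD i.val id)) := by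
      funext i
      have hfr : (fun r => (L r).getD ((i.succ : Fin (T+1)) : ℕ) id)
          = (fun r => ((L r).tail).getD i.val id) := funext fun r => by
        rw [show ((i.succ : Fin (T+1)) : ℕ) = i.val + 1 from rfl, getD_succ_tail _ _ _ (hne r)]
      rw [hfr]
    rw [htail, List.foldr_cons,
      ih (fun r => (L r).tail)
        (fun r => by have := hlen r; rw [List.length_tail]; omega)
        (fun r m hm => hpm r m (List.mem_of_mem_tail hm))]
    funext v
    simp only [Function.comp_apply]
    have hpmtail : ∀ r, ∀ m ∈ (L r).tail, PathMatch n m :=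
      fun r m hm => hpm r m (List.mem_of_mem_tail hm)
    have h1 : (L v.1).tail.foldr (· ∘ ·) id v.2.val < n :=
      fold_lt _ (hpmtail v.1) _ v.2.isLt
    have hhead : PathMatch n ((L v.1).getD 0 id) :=
      getD_pathMatch (hpm v.1) 0 (by have := hlen v.1; omega)
    have h2 : (L v.1).getD 0 id ((L v.1).tail.foldr (· ∘ ·) id v.2.val) < n :=
      pathMatch_lt hhead h1
    rw [rowStep_apply (fun r => (L r).tail.foldr (· ∘ ·) id) v h1]
    rw [rowStep_apply _ _ (show (L v.1).getD 0 id
        ((⟨(L v.1).tail.foldr (· ∘ ·) id v.2.val, h1⟩ : Fin n) : ℕ) < n from h2)]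
    rw [rowStep_apply _ _ (show (L v.1).foldr (· ∘ ·) id v.2.val < n from by
      rw [foldr_head_tail _ (hne v.1)]; exact h2)]
    refine Prod.ext_iff.mpr ⟨rfl, Fin.ext ?_⟩
    show (L v.1).getD 0 id ((L v.1).tail.foldr (· ∘ ·) id v.2.val)
      = (L v.1).foldr (· ∘ ·) id v.2.val
    rw [foldr_head_tail _ (hne v.1)]
    rfl

lemma colStep_injective {h n : ℕ} (M : Fin n → ℕ → ℕ)
    (hlt : ∀ c p, p < h → M c p < h) (hinj : ∀ c, Function.Injective (M c)) :
    Function.Injective (colStep h n M) := by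
  intro u v huv
  obtain ⟨u1, u2⟩ := u
  obtain ⟨v1, v2⟩ := v
  rw [colStep_apply M (u1, u2) (hlt u2 _ u1.isLt),
    colStep_apply M (v1, v2) (hlt v2 _ v1.isLt)] at huv
  rw [Prod.ext_iff] at huv
  obtain ⟨h1, h2⟩ := huv
  simp only at h1 h2
  subst h2
  have := hinj u2 (show M u2 u1.val = M u2 v1.val from congrArg Fin.val h1)
  exact Prod.ext_iff.mpr ⟨Fin.ext this, rfl⟩

lemma rowStep_injective {h n : ℕ} (M : Fin h → ℕ → ℕ)
    (hlt : ∀ r p, p < n → M r p < n) (hinj : ∀ r, Function.Injective (M r)) :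
    Function.Injective (rowStep h n M) := by
  intro u v huv
  obtain ⟨u1, u2⟩ := u
  obtain ⟨v1, v2⟩ := v
  rw [rowStep_apply M (u1, u2) (hlt u1 _ u2.isLt),
    rowStep_apply M (v1, v2) (hlt v1 _ v2.isLt)] at huv
  rw [Prod.ext_iff] at huv
  obtain ⟨h1, h2⟩ := huv
  simp only at h1 h2
  subst h1
  have := hinj u1 (show M u1 u2.val = M u1 v2.val from congrArg Fin.val h2)
  exact Prod.ext_iff.mpr ⟨rfl, Fin.ext this⟩

end GridRoute

/-- on the `h × n` grid with `h ≤ n`, every configuration `C` admits a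
solution of length at most `2 · d_max + 2h`, where
`d_max = max_v dist_G(v, C v)`; in particular (since `d_max ≤ OPT`) a solution of length
at most `2·OPT + 2h` always exists. -/
theorem stmt_17 (h n : ℕ) (hhn : h ≤ n) (C : Fin h × Fin n ≃ Fin h × Fin n) :
    ∃ ms : List (Fin h × Fin n → Fin h × Fin n),
      Solves (gridGraph h n) (⇑C) ms ∧
      ms.length ≤
        2 * (Finset.univ.sup fun v : Fin h × Fin n => (gridGraph h n).dist v (C v)) +
          2 * h := by
  classical
  by_cases hempty : h = 0 ∨ n = 0
  · refine ⟨[], ⟨by simp, ?_⟩, by simp⟩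
    funext v
    exfalso
    rcases hempty with h0 | h0
    · exact absurd v.1.isLt (by omega)
    · exact absurd v.2.isLt (by omega)
  · push_neg at hempty
    obtain ⟨hh0, hn0⟩ := hempty
    have hh : 0 < h := Nat.pos_of_ne_zero hh0
    have hn : 0 < n := Nat.pos_of_ne_zero hn0
    set dmax := (Finset.univ.sup fun v : Fin h × Fin n => (gridGraph h n).dist v (C v))
      with hdmax
    -- Hall assignment of intermediate rows
    have hfib_f : ∀ c : Fin n,
        (Finset.univ.filter (fun v : Fin h × Fin n => v.2 = c)).card = h := by
      intro c
      have hset : Finset.univ.filter (fun v : Fin h × Fin n => v.2 = c)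
          = Finset.univ.image (fun r : Fin h => (r, c)) := by
        ext v
        simp only [Finset.mem_filter, Finset.mem_univ, true_and, Finset.mem_image]
        constructor
        · intro hv
          exact ⟨v.1, by rw [← hv]⟩
        · rintro ⟨r, rfl⟩
          rfl
      rw [hset, Finset.card_image_of_injective _
        (fun a b hab => (Prod.ext_iff.mp hab).1), Finset.card_univ, Fintype.card_fin]
    have hfib_g : ∀ c : Fin n,
        (Finset.univ.filter (fun v : Fin h × Fin n => (C v).2 = c)).card = h := by
      intro c
      have hset : Finset.univ.filter (fun v : Fin h × Fin n => (C v).2 = c)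
          = (Finset.univ.filter (fun v : Fin h × Fin n => v.2 = c)).image (⇑C.symm) := by
        ext v
        simp only [Finset.mem_filter, Finset.mem_univ, true_and, Finset.mem_image]
        constructor
        · intro hv
          exact ⟨C v, hv, C.symm_apply_apply v⟩
        · rintro ⟨w, hw, rfl⟩
          simpa using hw
      rw [hset, Finset.card_image_of_injective _ C.symm.injective, hfib_f c]
    obtain ⟨φ, hφlt, hφf, hφg⟩ := GridRoute.hall_assign h
      (fun v : Fin h × Fin n => v.2) (fun v : Fin h × Fin n => (C v).2)
      Finset.univ hfib_f hfib_g
    -- Phase A : within columns move each token to its intermediate row φ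
    have hA : ∀ c : Fin n, ∃ ms : List (ℕ → ℕ), ms.length = h ∧
        (∀ m ∈ ms, GridRoute.PathMatch h m) ∧
        ∀ p, p < h →
          (fun p => if hp : p < h then φ (⟨p, hp⟩, c) else p) ((ms.foldr (· ∘ ·) id) p) = p := by
      intro c
      apply GridRoute.engine h h h (fun p => if hp : p < h then φ (⟨p, hp⟩, c) else p)
      · intro p hp
        rw [dif_pos hp]
        exact hφlt _ (Finset.mem_univ _)
      · intro p hp q hq hpq
        rw [dif_pos hp, dif_pos hq] at hpq
        have := hφf (⟨p, hp⟩, c) (Finset.mem_univ _) (⟨q, hq⟩, c) (Finset.mem_univ _) hpq rfl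
        exact congrArg (fun v : Fin h × Fin n => v.1.val) this
      · intro p hp
        rw [dif_pos hp]
        have := hφlt (⟨p, hp⟩, c) (Finset.mem_univ _)
        omega
      · exact min_le_left _ _
    choose msA hAlen hApm hAid using hA
    set NA : Fin n → ℕ → ℕ := fun c => (msA c).foldr (· ∘ ·) id with hNA
    have hNAlt : ∀ (c : Fin n) (p : ℕ), p < h → NA c p < h :=
      fun c p hp => GridRoute.fold_lt _ (hApm c) p hp
    have hNAinj : ∀ c, Function.Injective (NA c) := fun c => GridRoute.fold_inj _ (hApm c)
    set LA := List.ofFn (fun t : Fin h =>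
      GridRoute.colStep h n (fun c => (msA c).getD t.val id)) with hLA
    have hLAfold : LA.foldr (· ∘ ·) id = GridRoute.colStep h n NA :=
      GridRoute.colFold h (fun c => msA c) hAlen hApm
    have hcs2 : ∀ (r' : Fin h) (c : Fin n),
        (GridRoute.colStep h n NA (r', c)).2 = c := by
      intro r' c
      rw [GridRoute.colStep_apply NA (r', c) (hNAlt c _ r'.isLt)]
    have hφA : ∀ (r' : Fin h) (c : Fin n), φ (GridRoute.colStep h n NA (r', c)) = r'.val := by
      intro r' c
      rw [GridRoute.colStep_apply NA (r', c) (hNAlt c _ r'.isLt)]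
      have h2 := hAid c r'.val r'.isLt
      dsimp only at h2
      rw [dif_pos (hNAlt c _ r'.isLt)] at h2
      exact h2
    set D1 : Fin h × Fin n → Fin h × Fin n := ⇑C ∘ GridRoute.colStep h n NA with hD1
    -- Phase B : within rows move each token to its destination column
    set TB := min n (2 * dmax) with hTB
    have hB : ∀ r' : Fin h, ∃ ms : List (ℕ → ℕ), ms.length = TB ∧
        (∀ m ∈ ms, GridRoute.PathMatch n m) ∧
        ∀ p, p < n →
          (fun p => if hp : p < n then ((D1 (r', ⟨p, hp⟩)).2).val else p)
            ((ms.foldr (· ∘ ·) id) p) = p := by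
      intro r'
      apply GridRoute.engine n dmax TB
        (fun p => if hp : p < n then ((D1 (r', ⟨p, hp⟩)).2).val else p)
      · intro p hp
        rw [dif_pos hp]
        exact ((D1 (r', ⟨p, hp⟩)).2).isLt
      · intro p hp q hq hpq
        rw [dif_pos hp, dif_pos hq] at hpq
        have hg2 : (C (GridRoute.colStep h n NA (r', ⟨p, hp⟩))).2
            = (C (GridRoute.colStep h n NA (r', ⟨q, hq⟩))).2 := Fin.ext hpq
        have heq := hφg (GridRoute.colStep h n NA (r', ⟨p, hp⟩)) (Finset.mem_univ _)
          (GridRoute.colStep h n NA (r', ⟨q, hq⟩)) (Finset.mem_univ _)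
          (by rw [hφA, hφA]) hg2
        have := congrArg (fun v : Fin h × Fin n => v.2) heq
        simp only [hcs2] at this
        exact congrArg Fin.val this
      · intro p hp
        rw [dif_pos hp]
        have hcd := GridRoute.col_le_dist (GridRoute.colStep h n NA (r', ⟨p, hp⟩))
          (C (GridRoute.colStep h n NA (r', ⟨p, hp⟩)))
        have hsup : (gridGraph h n).dist (GridRoute.colStep h n NA (r', ⟨p, hp⟩))
            (C (GridRoute.colStep h n NA (r', ⟨p, hp⟩))) ≤ dmax :=
          Finset.le_sup (f := fun v => (gridGraph h n).dist v (C v)) (Finset.mem_univ _)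
        have hc2 : (GridRoute.colStep h n NA (r', ⟨p, hp⟩)).2.val = p := by
          rw [hcs2]
        have hD1v : (D1 (r', ⟨p, hp⟩)).2.val
            = (C (GridRoute.colStep h n NA (r', ⟨p, hp⟩))).2.val := rfl
        omega
      · exact le_refl _
    choose msB hBlen hBpm hBid using hB
    set NB : Fin h → ℕ → ℕ := fun r => (msB r).foldr (· ∘ ·) id with hNB
    have hNBlt : ∀ (r : Fin h) (p : ℕ), p < n → NB r p < n :=
      fun r p hp => GridRoute.fold_lt _ (hBpm r) p hp
    have hNBinj : ∀ r, Function.Injective (NB r) := fun r => GridRoute.fold_inj _ (hBpm r)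
    set LB := List.ofFn (fun t : Fin TB =>
      GridRoute.rowStep h n (fun r => (msB r).getD t.val id)) with hLB
    have hLBfold : LB.foldr (· ∘ ·) id = GridRoute.rowStep h n NB :=
      GridRoute.rowFold TB (fun r => msB r) hBlen hBpm
    set D2 : Fin h × Fin n → Fin h × Fin n := D1 ∘ GridRoute.rowStep h n NB with hD2
    have hD2snd : ∀ w : Fin h × Fin n, (D2 w).2 = w.2 := by
      intro w
      have h1 : NB w.1 w.2.val < n := hNBlt w.1 _ w.2.isLt
      have hrw : GridRoute.rowStep h n NB w = (w.1, ⟨NB w.1 w.2.val, h1⟩) :=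
        GridRoute.rowStep_apply NB w h1
      have h2 := hBid w.1 w.2.val w.2.isLt
      dsimp only at h2
      rw [dif_pos h1] at h2
      have : (D2 w).2.val = w.2.val := by
        show (D1 (GridRoute.rowStep h n NB w)).2.val = w.2.val
        rw [hrw]
        exact h2
      exact Fin.ext this
    have hD2inj : Function.Injective D2 := by
      rw [hD2, hD1]
      exact (C.injective.comp (GridRoute.colStep_injective NA hNAlt hNAinj)).comp
        (GridRoute.rowStep_injective NB hNBlt hNBinj)
    -- Phase C : within columns move each token to its destination row
    have hC : ∀ c' : Fin n, ∃ ms : List (ℕ → ℕ), ms.length = h ∧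
        (∀ m ∈ ms, GridRoute.PathMatch h m) ∧
        ∀ p, p < h →
          (fun p => if hp : p < h then ((D2 (⟨p, hp⟩, c')).1).val else p)
            ((ms.foldr (· ∘ ·) id) p) = p := by
      intro c'
      apply GridRoute.engine h h h
        (fun p => if hp : p < h then ((D2 (⟨p, hp⟩, c')).1).val else p)
      · intro p hp
        rw [dif_pos hp]
        exact ((D2 (⟨p, hp⟩, c')).1).isLt
      · intro p hp q hq hpq
        rw [dif_pos hp, dif_pos hq] at hpq
        have h1 : (D2 (⟨p, hp⟩, c')).1 = (D2 (⟨q, hq⟩, c')).1 := Fin.ext hpq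
        have h2 : (D2 (⟨p, hp⟩, c')).2 = (D2 (⟨q, hq⟩, c')).2 := by
          rw [hD2snd, hD2snd]
        have h3 : D2 (⟨p, hp⟩, c') = D2 (⟨q, hq⟩, c') := Prod.ext_iff.mpr ⟨h1, h2⟩
        have := hD2inj h3
        exact congrArg (fun v : Fin h × Fin n => v.1.val) this
      · intro p hp
        rw [dif_pos hp]
        have := ((D2 (⟨p, hp⟩, c')).1).isLt
        omega
      · exact min_le_left _ _
    choose msC hClen hCpm hCid using hC
    set NC : Fin n → ℕ → ℕ := fun c => (msC c).foldr (· ∘ ·) id with hNC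
    have hNClt : ∀ (c : Fin n) (p : ℕ), p < h → NC c p < h :=
      fun c p hp => GridRoute.fold_lt _ (hCpm c) p hp
    set LC := List.ofFn (fun t : Fin h =>
      GridRoute.colStep h n (fun c => (msC c).getD t.val id)) with hLC
    have hLCfold : LC.foldr (· ∘ ·) id = GridRoute.colStep h n NC :=
      GridRoute.colFold h (fun c => msC c) hClen hCpm
    -- the three phases compose to the inverse of C
    have hD3 : D2 ∘ GridRoute.colStep h n NC = id := by
      funext w
      have h1 : NC w.2 w.1.val < h := hNClt w.2 _ w.1.isLt
      have hrw : GridRoute.colStep h n NC w = (⟨NC w.2 w.1.val, h1⟩, w.2) := by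
        conv_lhs => rw [show w = (w.1, w.2) from rfl]
        exact GridRoute.colStep_apply NC (w.1, w.2) h1
      have h2 := hCid w.2 w.1.val w.1.isLt
      dsimp only at h2
      rw [dif_pos h1] at h2
      show D2 (GridRoute.colStep h n NC w) = w
      rw [hrw]
      refine Prod.ext_iff.mpr ⟨Fin.ext ?_, ?_⟩
      · exact h2
      · exact hD2snd _
    refine ⟨LA ++ (LB ++ LC), ⟨?_, ?_⟩, ?_⟩
    · intro m hm
      rcases List.mem_append.mp hm with hm1 | hm1
      · rw [hLA, List.mem_ofFn] at hm1
        obtain ⟨t, rfl⟩ := hm1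
        exact GridRoute.colStep_matching _ (fun c =>
          GridRoute.getD_pathMatch (hApm c) t.val (by rw [hAlen c]; exact t.isLt))
      · rcases List.mem_append.mp hm1 with hm2 | hm2
        · rw [hLB, List.mem_ofFn] at hm2
          obtain ⟨t, rfl⟩ := hm2
          exact GridRoute.rowStep_matching _ (fun r =>
            GridRoute.getD_pathMatch (hBpm r) t.val (by rw [hBlen r]; exact t.isLt))
        · rw [hLC, List.mem_ofFn] at hm2
          obtain ⟨t, rfl⟩ := hm2
          exact GridRoute.colStep_matching _ (fun c =>
            GridRoute.getD_pathMatch (hCpm c) t.val (by rw [hClen c]; exact t.isLt))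
    · show ⇑C ∘ (LA ++ (LB ++ LC)).foldr (· ∘ ·) id = id
      rw [GridRoute.foldr_comp_append, GridRoute.foldr_comp_append,
        hLAfold, hLBfold, hLCfold]
      exact hD3
    · rw [List.length_append, List.length_append, hLA, hLB, hLC]
      simp only [List.length_ofFn]
      have : TB ≤ 2 * dmax := min_le_right _ _
      omega
end

section
/- Let G be a subdivided star: a tree consisting of h ≥ 3 paths (branches) B_1,…,B_h joined at a single common endpoint v_0, where B_b denotes the set of non-center vertices of branch b. For a configuration C on G, say a token t ≠ v_0 is on the wrong branch if its destination vertex t lies in B_b but its current vertex C^{-1}(t) does not lie in B_b. Then every sequence of matchings solving the instance (G,C) has length at least the number of tokens on the wrong branch. -/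
/-- The vertex set of a subdivided star with `h` branches, branch `b` having `nb b`
non-center vertices: `none` is the center `v₀`, and `some ⟨b, i⟩` is the vertex `v_{b,i+1}`
of branch `b` at distance `i + 1` from the center. -/
abbrev StarV (h : ℕ) (nb : Fin h → ℕ) := Option ((b : Fin h) × Fin (nb b))

/-- The subdivided star graph: the center is adjacent to the first vertex of every branch,
and consecutive vertices of every branch are adjacent. -/
def subStar (h : ℕ) (nb : Fin h → ℕ) : SimpleGraph (StarV h nb) :=
  SimpleGraph.fromRel fun u v =>
    (∃ (b : Fin h) (hb : 0 < nb b), u = none ∧ v = some ⟨b, ⟨0, hb⟩⟩) ∨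
    (∃ (b : Fin h) (i j : Fin (nb b)), u = some ⟨b, i⟩ ∧ v = some ⟨b, j⟩ ∧
      i.val + 1 = j.val)

/-- The token `t` is on the wrong branch in the configuration `C`: its destination vertex
`t` lies in branch `b` but its current vertex `C⁻¹ t` does not. -/
def OnWrongBranch {h : ℕ} {nb : Fin h → ℕ} (C : StarV h nb ≃ StarV h nb)
    (t : StarV h nb) : Prop :=
  ∃ (b : Fin h) (i : Fin (nb b)), t = some ⟨b, i⟩ ∧ ∀ j : Fin (nb b), C.symm t ≠ some ⟨b, j⟩

section Aux

variable {V : Type*}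

/-- Apply the matchings of `ms` in order (head first). -/
def applyL (ms : List (V → V)) (v : V) : V := ms.foldl (fun w m => m w) v

lemma applyL_cons (m : V → V) (ms : List (V → V)) (v : V) :
    applyL (m :: ms) v = applyL ms (m v) := rfl

lemma foldr_applyL (ms : List (V → V)) (h : ∀ m ∈ ms, Function.Involutive m) (u : V) :
    ms.foldr (· ∘ ·) id (applyL ms u) = u := by
  induction ms generalizing u with
  | nil => rfl
  | cons m rest ih =>
      simp only [List.foldr_cons, Function.comp_apply, applyL_cons]
      rw [ih (fun m' hm' => h m' (List.mem_cons_of_mem _ hm'))]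
      exact h m (List.mem_cons_self) u

lemma applyL_injective (ms : List (V → V)) (h : ∀ m ∈ ms, Function.Involutive m) :
    Function.Injective (applyL ms) := by
  induction ms with
  | nil => exact fun a b hab => hab
  | cons m rest ih =>
      intro a b hab
      simp only [applyL_cons] at hab
      exact (h m (List.mem_cons_self)).injective
        (ih (fun m' hm' => h m' (List.mem_cons_of_mem _ hm')) hab)

end Aux

lemma adj_branch {h : ℕ} {nb : Fin h → ℕ} {b : Fin h} {i : Fin (nb b)} {u : StarV h nb}
    (hadj : (subStar h nb).Adj u (some ⟨b, i⟩)) :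
    u = none ∨ ∃ j : Fin (nb b), u = some ⟨b, j⟩ := by
  rw [subStar, SimpleGraph.fromRel_adj] at hadj
  rcases hadj.2 with (⟨b', hb', hu, hv⟩ | ⟨b', i', j', hu, hv, _⟩) |
      (⟨b', hb', hu, hv⟩ | ⟨b', i', j', hu, hv, _⟩)
  · exact Or.inl hu
  · obtain ⟨rfl, _⟩ := Sigma.mk.inj_iff.mp (Option.some.inj hv)
    exact Or.inr ⟨i', hu⟩
  · exact absurd hu (by simp)
  · obtain ⟨rfl, _⟩ := Sigma.mk.inj_iff.mp (Option.some.inj hu)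
    exact Or.inr ⟨j', hv⟩

lemma cross_center {h : ℕ} {nb : Fin h → ℕ} (ms : List (StarV h nb → StarV h nb))
    (hm : ∀ m ∈ ms, IsMatchingPerm (subStar h nb) m) (b : Fin h) (u : StarV h nb)
    (h0 : ∀ j : Fin (nb b), u ≠ some ⟨b, j⟩) (i : Fin (nb b))
    (hk : applyL ms u = some ⟨b, i⟩) :
    ∃ j < ms.length, applyL (ms.take j) u = none := by
  induction ms generalizing u i with
  | nil => exact absurd hk (h0 i)
  | cons m rest ih =>
      by_cases hc : ∃ j : Fin (nb b), m u = some ⟨b, j⟩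
      · obtain ⟨j0, hj0⟩ := hc
        rcases (hm m (List.mem_cons_self)).2 u with heq | hadj
        · exact absurd (heq ▸ hj0) (h0 j0)
        · rw [hj0] at hadj
          rcases adj_branch hadj with hnone | ⟨j', hj'⟩
          · exact ⟨0, Nat.succ_pos _, hnone⟩
          · exact absurd hj' (h0 j')
      · push_neg at hc
        rw [applyL_cons] at hk
        obtain ⟨j, hjlt, hjnone⟩ :=
          ih (fun m' hm' => hm m' (List.mem_cons_of_mem _ hm')) (m u) hc i hk
        refine ⟨j + 1, Nat.succ_lt_succ hjlt, ?_⟩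
        rw [List.take_succ_cons, applyL_cons]
        exact hjnone

/-- on a subdivided star with `h ≥ 3` (nonempty) branches, every solution of
the instance `(G, C)` has length at least the number of tokens on the wrong branch. -/
theorem stmt_18 (h : ℕ) (hh : 3 ≤ h) (nb : Fin h → ℕ) (hnb : ∀ b, 1 ≤ nb b)
    (C : StarV h nb ≃ StarV h nb) (ms : List (StarV h nb → StarV h nb))
    (hms : Solves (subStar h nb) (⇑C) ms) :
    Nat.card {t : StarV h nb // OnWrongBranch C t} ≤ ms.length := by
  obtain ⟨hmatch, hsolve⟩ := hms
  have hinv : ∀ m ∈ ms, Function.Involutive m := fun m hm => (hmatch m hm).1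
  have hfin : ∀ t : StarV h nb, applyL ms (C.symm t) = t := by
    intro t
    have h1 : C (ms.foldr (· ∘ ·) id (applyL ms (C.symm t))) = applyL ms (C.symm t) :=
      congrFun hsolve (applyL ms (C.symm t))
    rw [foldr_applyL ms hinv (C.symm t), Equiv.apply_symm_apply] at h1
    exact h1.symm
  have key : ∀ t : {t : StarV h nb // OnWrongBranch C t},
      ∃ j < ms.length, applyL (ms.take j) (C.symm t.1) = none := by
    rintro ⟨t, b, i, ht, hw⟩
    refine cross_center ms hmatch b (C.symm t) hw i ?_
    rw [hfin t, ht]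
  choose j hjlt hjnone using key
  have hinj : Function.Injective (fun t : {t : StarV h nb // OnWrongBranch C t} =>
      (⟨j t, hjlt t⟩ : Fin ms.length)) := by
    intro t t' htt'
    have hje : j t = j t' := Fin.mk.inj_iff.mp htt'
    have h1 : applyL (ms.take (j t)) (C.symm t.1) = applyL (ms.take (j t)) (C.symm t'.1) := by
      rw [hjnone t, hje, hjnone t']
    have h2 := applyL_injective (ms.take (j t))
      (fun m' hm' => hinv m' (List.mem_of_mem_take hm')) h1
    exact Subtype.ext (C.symm.injective h2)
  calc Nat.card {t : StarV h nb // OnWrongBranch C t}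
      ≤ Nat.card (Fin ms.length) := Nat.card_le_card_of_injective _ hinj
    _ = ms.length := by simp
end

section
/- Let G be a subdivided star with center v_0 and branches B_1,…,B_h, where the vertices of branch b are v_{b,1},…,v_{b,n_b} ordered by increasing distance from v_0. Call a configuration D branch-sorted if for every branch b and all 1 ≤ i < j ≤ n_b: if the token D(v_{b,i}) has its destination vertex in B_b, then the token D(v_{b,j}) also has its destination vertex in B_b (that is, on every branch, all tokens that do not belong to that branch are closer to the center than all tokens that do). If the instance (G,C) has a solution of length k, then there exists a sequence of at most k matchings, none of which contains an edge incident to v_0, that routes C to some branch-sorted configuration. -/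
/-- A configuration `D` on the subdivided star is branch-sorted: on every branch `b`, if
the token at `v_{b,i}` belongs to branch `b` (its destination lies in `B_b`), then so does
the token at every vertex `v_{b,j}` farther from the center (`i < j`). -/
def BranchSorted {h : ℕ} {nb : Fin h → ℕ} (D : StarV h nb → StarV h nb) : Prop :=
  ∀ (b : Fin h) (i j : Fin (nb b)), i < j →
    (∃ i' : Fin (nb b), D (some ⟨b, i⟩) = some ⟨b, i'⟩) →
    ∃ j' : Fin (nb b), D (some ⟨b, j⟩) = some ⟨b, j'⟩

namespace S19
open Classical

noncomputable def cnt (w : ℕ → Prop) : ℕ → ℕ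
  | 0 => 0
  | p + 1 => cnt w p + (if w (p + 1) then 1 else 0)

def wstep (w : ℕ → Prop) (p : ℕ) : Prop :=
  (w p ∧ (p ≤ 1 ∨ w (p - 1))) ∨ (¬ w p ∧ 1 ≤ p ∧ w (p + 1))

lemma cnt_le (w : ℕ → Prop) : ∀ p, cnt w p ≤ p := by
  intro p; induction p with
  | zero => simp [cnt]
  | succ p ih => simp only [cnt]; split <;> omega

lemma cnt_mono (w : ℕ → Prop) {p q : ℕ} (hpq : p ≤ q) : cnt w p ≤ cnt w q := by
  induction q with
  | zero => have : p = 0 := by omega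
            subst this; exact le_rfl
  | succ q ih =>
    rcases Nat.eq_or_lt_of_le hpq with rfl | hlt
    · exact le_refl _
    · have := ih (by omega); simp only [cnt]; split <;> omega

lemma cnt_lip (w : ℕ → Prop) {p q : ℕ} (hpq : p ≤ q) : cnt w q ≤ cnt w p + (q - p) := by
  induction q with
  | zero => interval_cases p; simp
  | succ q ih =>
    rcases Nat.eq_or_lt_of_le hpq with rfl | hlt
    · simp
    · have := ih (by omega); simp only [cnt]; split <;> omega

lemma cnt_full (w : ℕ → Prop) : ∀ p, p ≤ cnt w p → ∀ r, 1 ≤ r → r ≤ p → w r := by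
  intro p
  induction p with
  | zero => intro _ r h1 h2; omega
  | succ p ih =>
    intro hc r h1 h2
    have hle := cnt_le w p
    have hif : w (p+1) ∧ p ≤ cnt w p := by
      by_cases hw : w (p+1)
      · simp only [cnt, if_pos hw] at hc
        exact ⟨hw, by omega⟩
      · simp only [cnt, if_neg hw] at hc
        omega
    rcases Nat.eq_or_lt_of_le h2 with rfl | hlt
    · exact hif.1
    · exact ih hif.2 r h1 (by omega)

lemma transfer (w : ℕ → Prop) : ∀ p, cnt (wstep w) p
    = cnt w p + (if 1 ≤ p ∧ w (p + 1) ∧ ¬ w p then 1 else 0) := by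
  intro p
  induction p with
  | zero => simp [cnt]
  | succ p ih =>
    simp only [cnt, ih]
    rcases Nat.eq_zero_or_pos p with hp | hp
    · subst hp
      by_cases h2 : w 1 <;> by_cases h3 : w 2 <;>
        simp [wstep, h2, h3]
    · have hps : wstep w (p+1) ↔ ((w (p+1) ∧ w p) ∨ (¬ w (p+1) ∧ w (p+1+1))) := by
        have h0 : ¬ (p + 1 ≤ 1) := by omega
        simp [wstep, h0]
      by_cases h1 : w p <;> by_cases h2 : w (p+1) <;> by_cases h3 : w (p+1+1) <;>
        simp [hps, h1, h2, h3, hp] <;> omega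

lemma supp_step (w : ℕ → Prop) (B : ℕ) (hB : ∀ p, B < p → ¬ w p) :
    ∀ p, B < p → ¬ wstep w p := by
  intro p hp
  have h1 := hB p hp
  have h2 := hB (p+1) (by omega)
  simp [wstep, h1, h2]

lemma key1 (w : ℕ → Prop) (p : ℕ) :
    min p (min (cnt w (p + 1)) (cnt w (p - 1) + 1)) ≤ cnt (wstep w) p := by
  rcases Nat.eq_zero_or_pos p with rfl | hp
  · simp
  obtain ⟨q, rfl⟩ : ∃ q, p = q + 1 := ⟨p - 1, by omega⟩
  have ht := transfer w (q+1)
  have hc1 : cnt w (q+1) = cnt w q + (if w (q+1) then 1 else 0) := rfl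
  have hc2 : cnt w (q+1+1) = cnt w (q+1) + (if w (q+1+1) then 1 else 0) := rfl
  simp only [Nat.add_sub_cancel]
  by_cases h1 : w (q+1) <;> by_cases h2 : w (q+1+1) <;>
    simp [h1, h2] at ht hc1 hc2 ⊢ <;> omega

lemma main_ind (w : ℕ → Prop) :
    ∀ t B p, B ≤ p → (∀ s, s ≤ t → B ≤ s + cnt w (p + t - 2*s)) →
      B ≤ cnt (wstep^[t] w) p := by
  intro t
  induction t with
  | zero =>
    intro B p _ hs
    have := hs 0 le_rfl
    simpa using this
  | succ t ih =>
    intro B p hBp hs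
    rw [Function.iterate_succ_apply']
    set W := wstep^[t] w with hW
    have hk := key1 W p
    have hA : B ≤ cnt W (p+1) := by
      apply ih B (p+1) (by omega)
      intro s hst
      have := hs s (by omega)
      have heq : p + 1 + t - 2*s = p + (t+1) - 2*s := by omega
      rw [heq]; exact this
    have hBb : B ≤ cnt W (p-1) + 1 := by
      rcases Nat.eq_zero_or_pos B with rfl | hB1
      · omega
      have : B - 1 ≤ cnt W (p-1) := by
        apply ih (B-1) (p-1) (by omega)
        intro s hst
        have := hs (s+1) (by omega)
        have heq : p - 1 + t - 2*s = p + (t+1) - 2*(s+1) := by omega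
        rw [heq]; omega
      omega
    omega

lemma cnt_stable (w : ℕ → Prop) (B : ℕ) (hB : ∀ p, B < p → ¬ w p) :
    cnt (wstep w) B = cnt w B := by
  have := transfer w B
  have h2 := hB (B+1) (by omega)
  simp [h2] at this
  exact this

lemma supp_iter (w : ℕ → Prop) (B : ℕ) (hB : ∀ p, B < p → ¬ w p) :
    ∀ t p, B < p → ¬ (wstep^[t] w) p := by
  intro t
  induction t with
  | zero => simpa using hB
  | succ t ih =>
    intro p hp
    rw [Function.iterate_succ_apply']
    exact supp_step _ B ih p hp

lemma cnt_iter_stable (w : ℕ → Prop) (B : ℕ) (hB : ∀ p, B < p → ¬ w p) :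
    ∀ t, cnt (wstep^[t] w) B = cnt w B := by
  intro t
  induction t with
  | zero => rfl
  | succ t ih =>
    rw [Function.iterate_succ_apply', cnt_stable _ B (supp_iter w B hB t), ih]

lemma sorted_after (w : ℕ → Prop) (k : ℕ) (hB : ∀ p, k < p → ¬ w p) :
    ∀ p, min p (cnt w k) ≤ cnt (wstep^[k] w) p := by
  intro p
  set m := cnt w k with hm
  apply main_ind w k (min p m) p (by omega)
  intro s hs
  set q := p + k - 2*s with hq
  have hmk : m ≤ k := cnt_le w k
  rcases le_or_gt k q with hqk | hqk
  · have : cnt w q = m := by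
      have h1 := cnt_lip w hqk
      have h2 : ∀ r, k ≤ r → cnt w r = cnt w k := by
        intro r hr
        induction r with
        | zero => have : k = 0 := by omega
                  rw [this]
        | succ r ih =>
          rcases Nat.eq_or_lt_of_le hr with heq | hlt
          · rw [← heq]
          · have hw : ¬ w (r+1) := hB _ (by omega)
            simp only [cnt, hw]; simp [ih (by omega)]
      exact h2 q hqk
    omega
  · rcases le_or_gt (p + k) (2*s) with hbig | hsmall
    · -- q = 0 case: s large
      have : min p m ≤ s := by omega
      omega
    · have hqe : q + 2*s = p + k := by omega
      have hgoods : q + m ≤ cnt w q + k := by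
        have := cnt_lip w (le_of_lt hqk)
        omega
      have := cnt_le w q
      omega


variable {h : ℕ} {nb : Fin h → ℕ}

/-- token `x` belongs to branch `b` -/
def isGood (b : Fin h) (x : StarV h nb) : Prop := ∃ i : Fin (nb b), x = some ⟨b, i⟩

/-- vertex at 0-indexed depth `j` on branch `b` holds a token belonging to `b` -/
def goodV (D : StarV h nb → StarV h nb) (b : Fin h) (j : ℕ) : Prop :=
  j < nb b ∧ ∀ hj : j < nb b, isGood b (D (some ⟨b, ⟨j, hj⟩⟩))

def badV (D : StarV h nb → StarV h nb) (b : Fin h) (j : ℕ) : Prop :=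
  j < nb b ∧ ∀ hj : j < nb b, ¬ isGood b (D (some ⟨b, ⟨j, hj⟩⟩))

lemma good_or_bad (D : StarV h nb → StarV h nb) (b : Fin h) (j : ℕ) (hj : j < nb b) :
    goodV D b j ∨ badV D b j := by
  by_cases hg : isGood b (D (some ⟨b, ⟨j, hj⟩⟩))
  · exact Or.inl ⟨hj, fun _ => hg⟩
  · exact Or.inr ⟨hj, fun _ => hg⟩

lemma not_good_and_bad {D : StarV h nb → StarV h nb} {b : Fin h} {j : ℕ}
    (hg : goodV D b j) (hb : badV D b j) : False :=
  hb.2 hb.1 (hg.2 hb.1)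

/-- the word of "bad" positions (1-indexed) of branch `b` in configuration `D` -/
def wd (D : StarV h nb → StarV h nb) (b : Fin h) (p : ℕ) : Prop :=
  1 ≤ p ∧ badV D b (p - 1)

noncomputable def gstepAux (D : StarV h nb → StarV h nb) (b : Fin h) (i : Fin (nb b)) :
    StarV h nb :=
  if hout : goodV D b i.val ∧ badV D b (i.val + 1) then some ⟨b, ⟨i.val + 1, hout.2.1⟩⟩
  else if _ : 1 ≤ i.val ∧ badV D b i.val ∧ goodV D b (i.val - 1) then
    some ⟨b, ⟨i.val - 1, Nat.lt_of_le_of_lt (Nat.sub_le _ _) i.isLt⟩⟩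
  else some ⟨b, i⟩

noncomputable def gstep (D : StarV h nb → StarV h nb) : StarV h nb → StarV h nb
  | none => none
  | some x => gstepAux D x.1 x.2

lemma gstepAux_out {D : StarV h nb → StarV h nb} {b : Fin h} {i : Fin (nb b)}
    (hout : goodV D b i.val ∧ badV D b (i.val + 1)) :
    gstepAux D b i = some ⟨b, ⟨i.val + 1, hout.2.1⟩⟩ := by
  rw [gstepAux]; rw [dif_pos hout]

lemma gstepAux_in {D : StarV h nb → StarV h nb} {b : Fin h} {i : Fin (nb b)}
    (hout : ¬ (goodV D b i.val ∧ badV D b (i.val + 1)))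
    (hin : 1 ≤ i.val ∧ badV D b i.val ∧ goodV D b (i.val - 1)) :
    gstepAux D b i = some ⟨b, ⟨i.val - 1,
      Nat.lt_of_le_of_lt (Nat.sub_le _ _) i.isLt⟩⟩ := by
  rw [gstepAux]; rw [dif_neg hout, dif_pos hin]

lemma gstepAux_self {D : StarV h nb → StarV h nb} {b : Fin h} {i : Fin (nb b)}
    (hout : ¬ (goodV D b i.val ∧ badV D b (i.val + 1)))
    (hin : ¬ (1 ≤ i.val ∧ badV D b i.val ∧ goodV D b (i.val - 1))) :
    gstepAux D b i = some ⟨b, i⟩ := by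
  rw [gstepAux]; rw [dif_neg hout, dif_neg hin]

lemma gstep_involutive (D : StarV h nb → StarV h nb) :
    Function.Involutive (gstep D) := by
  intro v
  match v with
  | none => rfl
  | some ⟨b, i⟩ =>
    have hv : gstep D (some ⟨b, i⟩) = gstepAux D b i := rfl
    rw [hv]
    by_cases hout : goodV D b i.val ∧ badV D b (i.val + 1)
    · rw [gstepAux_out hout]
      set i' : Fin (nb b) := ⟨i.val + 1, hout.2.1⟩ with hi'
      have hv2 : gstep D (some ⟨b, i'⟩) = gstepAux D b i' := rfl
      rw [hv2]
      have hiv : i'.val = i.val + 1 := rfl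
      have hout2 : ¬ (goodV D b i'.val ∧ badV D b (i'.val + 1)) := by
        intro hgb
        exact not_good_and_bad hgb.1 (by rw [hiv]; exact hout.2)
      have hin2 : 1 ≤ i'.val ∧ badV D b i'.val ∧ goodV D b (i'.val - 1) := by
        refine ⟨by omega, by rw [hiv]; exact hout.2, ?_⟩
        have : i'.val - 1 = i.val := by omega
        rw [this]; exact hout.1
      rw [gstepAux_in hout2 hin2]
      simp only [Option.some.injEq, Sigma.mk.inj_iff, heq_eq_eq, true_and]
      exact Fin.ext (by show i'.val - 1 = i.val; omega)
    · by_cases hin : 1 ≤ i.val ∧ badV D b i.val ∧ goodV D b (i.val - 1)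
      · rw [gstepAux_in hout hin]
        set i' : Fin (nb b) := ⟨i.val - 1, Nat.lt_of_le_of_lt (Nat.sub_le _ _) i.isLt⟩
          with hi'
        have hv2 : gstep D (some ⟨b, i'⟩) = gstepAux D b i' := rfl
        rw [hv2]
        have hiv : i'.val = i.val - 1 := rfl
        have hiv2 : i'.val + 1 = i.val := by
          have := hin.1; rw [hiv]; omega
        have hout2 : goodV D b i'.val ∧ badV D b (i'.val + 1) := by
          refine ⟨by rw [hiv]; exact hin.2.2, by rw [hiv2]; exact hin.2.1⟩
        rw [gstepAux_out hout2]
        simp only [Option.some.injEq, Sigma.mk.inj_iff, heq_eq_eq, true_and]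
        exact Fin.ext (by show i'.val + 1 = i.val; exact hiv2)
      · rw [gstepAux_self hout hin]
        rw [hv, gstepAux_self hout hin]

lemma gstep_none (D : StarV h nb → StarV h nb) : gstep D none = none := rfl

lemma gstep_adj (D : StarV h nb → StarV h nb) (v : StarV h nb) :
    gstep D v = v ∨ (subStar h nb).Adj v (gstep D v) := by
  match v with
  | none => exact Or.inl rfl
  | some ⟨b, i⟩ =>
    have hv : gstep D (some ⟨b, i⟩) = gstepAux D b i := rfl
    by_cases hout : goodV D b i.val ∧ badV D b (i.val + 1)
    · refine Or.inr ?_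
      rw [hv, gstepAux_out hout, subStar, SimpleGraph.fromRel_adj]
      constructor
      · intro heq
        injection heq with heq2
        have h2 := congrArg (fun (x : (b : Fin h) × Fin (nb b)) => (x.2 : ℕ)) heq2
        simp at h2
      · exact Or.inl (Or.inr ⟨b, i, ⟨i.val + 1, hout.2.1⟩, rfl, rfl, rfl⟩)
    · by_cases hin : 1 ≤ i.val ∧ badV D b i.val ∧ goodV D b (i.val - 1)
      · refine Or.inr ?_
        rw [hv, gstepAux_in hout hin, subStar, SimpleGraph.fromRel_adj]
        have hiv : i.val - 1 + 1 = i.val := by omega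
        constructor
        · intro heq
          injection heq with heq2
          have h2 := congrArg (fun (x : (b : Fin h) × Fin (nb b)) => (x.2 : ℕ)) heq2
          simp at h2
          omega
        · exact Or.inr (Or.inr ⟨b, ⟨i.val - 1,
            Nat.lt_of_le_of_lt (Nat.sub_le _ _) i.isLt⟩, i, rfl, rfl, hiv⟩)
      · exact Or.inl (by rw [hv, gstepAux_self hout hin])

lemma gstep_matching (D : StarV h nb → StarV h nb) :
    IsMatchingPerm (subStar h nb) (gstep D) :=
  ⟨gstep_involutive D, gstep_adj D⟩

lemma badV_of_not_goodV {D : StarV h nb → StarV h nb} {b : Fin h} {j : ℕ}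
    (hj : j < nb b) (hg : ¬ goodV D b j) : badV D b j := by
  rcases good_or_bad D b j hj with h | h
  · exact absurd h hg
  · exact h

/-- the key bridge: one greedy step on configurations corresponds to `wstep` on words -/
lemma wd_gstep (D : StarV h nb → StarV h nb) (b : Fin h) :
    wd (fun v => D (gstep D v)) b = wstep (wd D b) := by
  funext p
  apply propext
  set D' := fun v => D (gstep D v) with hD'
  match p with
  | 0 => simp [wd, wstep]
  | (j+1) =>
    have hwd1 : wd D b (j+1) ↔ badV D b j := by
      constructor
      · exact fun hh => hh.2
      · exact fun hh => ⟨by omega, hh⟩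
    have hwd2 : wd D b (j+1+1) ↔ badV D b (j+1) := by
      constructor
      · exact fun hh => hh.2
      · exact fun hh => ⟨by omega, hh⟩
    have hwd1' : wd D' b (j+1) ↔ badV D' b j := by
      constructor
      · exact fun hh => hh.2
      · exact fun hh => ⟨by omega, hh⟩
    have hwdj : wd D b j ↔ (1 ≤ j ∧ badV D b (j-1)) := Iff.rfl
    rcases Nat.lt_or_ge j (nb b) with hj | hj
    · -- j < nb b
      have hD'val : ∀ hj' : j < nb b,
          D' (some ⟨b, ⟨j, hj'⟩⟩) = D (gstepAux D b ⟨j, hj'⟩) := fun _ => rfl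
      rcases good_or_bad D b j hj with hgj | hbj
      · -- good at j
        have hnb : ¬ badV D b j := fun hb => not_good_and_bad hgj hb
        by_cases hb1 : badV D b (j+1)
        · -- moves out: position j+1 becomes bad
          have hstep : ∀ hj' : j < nb b,
              gstepAux D b ⟨j, hj'⟩ = some ⟨b, ⟨j+1, hb1.1⟩⟩ := by
            intro hj'
            exact gstepAux_out ⟨hgj, hb1⟩
          have hlhs : badV D' b j := by
            refine ⟨hj, fun hj' => ?_⟩
            rw [hD'val hj', hstep hj']
            exact hb1.2 hb1.1
          constructor
          · intro _
            exact Or.inr ⟨fun hnn => hnb (hwd1.1 hnn), by omega, hwd2.2 hb1⟩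
          · intro _
            exact hwd1'.2 hlhs
        · -- stays: position j+1 stays good
          have hin : ¬ (1 ≤ j ∧ badV D b j ∧ goodV D b (j - 1)) := fun hh => hnb hh.2.1
          have hout : ¬ (goodV D b j ∧ badV D b (j+1)) := fun hh => hb1 hh.2
          have hstep : ∀ hj' : j < nb b,
              gstepAux D b ⟨j, hj'⟩ = some ⟨b, ⟨j, hj'⟩⟩ := by
            intro hj'
            exact gstepAux_self hout hin
          have hlhs : ¬ badV D' b j := by
            intro hb
            refine not_good_and_bad hgj ⟨hj, fun hj' => ?_⟩
            have := hb.2 hj'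
            rw [hD'val hj', hstep hj'] at this
            exact this
          constructor
          · intro hl
            exact absurd (hwd1'.1 hl) hlhs
          · rintro (⟨hw1, _⟩ | ⟨_, _, hw2⟩)
            · exact absurd (hwd1.1 hw1) hnb
            · exact absurd (hwd2.1 hw2) hb1
      · -- bad at j
        have hng : ¬ goodV D b j := fun hg => not_good_and_bad hg hbj
        have hout : ¬ (goodV D b j ∧ badV D b (j+1)) := fun hh => hng hh.1
        by_cases hin : 1 ≤ j ∧ goodV D b (j - 1)
        · -- moves in: position j+1 becomes good
          have hin' : 1 ≤ j ∧ badV D b j ∧ goodV D b (j - 1) := ⟨hin.1, hbj, hin.2⟩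
          have hstep : ∀ hj' : j < nb b,
              gstepAux D b ⟨j, hj'⟩ = some ⟨b, ⟨j - 1,
                Nat.lt_of_le_of_lt (Nat.sub_le _ _) hj'⟩⟩ := by
            intro hj'
            exact gstepAux_in hout hin'
          have hlhs : ¬ badV D' b j := by
            intro hb
            have := hb.2 hj
            rw [hD'val hj, hstep hj] at this
            exact this (hin.2.2 _)
          constructor
          · intro hl
            exact absurd (hwd1'.1 hl) hlhs
          · rintro (⟨_, hw0 | hw0⟩ | ⟨hnw, _, _⟩)
            · omega
            · exact absurd (hwdj.1 hw0).2 (fun hb => not_good_and_bad hin.2 hb)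
            · exact absurd (hwd1.2 hbj) hnw
        · -- stays bad
          have hin' : ¬ (1 ≤ j ∧ badV D b j ∧ goodV D b (j - 1)) :=
            fun hh => hin ⟨hh.1, hh.2.2⟩
          have hstep : ∀ hj' : j < nb b,
              gstepAux D b ⟨j, hj'⟩ = some ⟨b, ⟨j, hj'⟩⟩ := by
            intro hj'
            exact gstepAux_self hout hin'
          have hlhs : badV D' b j := by
            refine ⟨hj, fun hj' => ?_⟩
            rw [hD'val hj', hstep hj']
            exact hbj.2 hj'
          constructor
          · intro _
            refine Or.inl ⟨hwd1.2 hbj, ?_⟩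
            rcases Nat.eq_zero_or_pos j with rfl | hj1
            · exact Or.inl (by omega)
            · have hjm : j - 1 < nb b := by omega
              have : badV D b (j-1) := by
                rcases good_or_bad D b (j-1) hjm with hg | hb
                · exact absurd ⟨by omega, hg⟩ hin
                · exact hb
              exact Or.inr (hwdj.2 ⟨hj1, this⟩)
          · intro _
            exact hwd1'.2 hlhs
    · -- j ≥ nb b : everything false
      have h1 : ¬ wd D' b (j+1) := fun hh => absurd hh.2.1 (by omega)
      have h2 : ¬ wd D b (j+1) := fun hh => absurd hh.2.1 (by omega)
      have h3 : ¬ wd D b (j+1+1) := fun hh => absurd hh.2.1 (by omega)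
      constructor
      · intro hl; exact absurd hl h1
      · rintro (⟨hw, _⟩ | ⟨_, _, hw⟩)
        · exact absurd hw h2
        · exact absurd hw h3

noncomputable def gList (D : StarV h nb → StarV h nb) : ℕ → List (StarV h nb → StarV h nb)
  | 0 => []
  | k+1 => gstep D :: gList (fun v => D (gstep D v)) k

noncomputable def iterD (D : StarV h nb → StarV h nb) : ℕ → (StarV h nb → StarV h nb)
  | 0 => D
  | k+1 => iterD (fun v => D (gstep D v)) k

lemma gList_length : ∀ (k : ℕ) (D : StarV h nb → StarV h nb), (gList D k).length = k := by
  intro k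
  induction k with
  | zero => intro D; rfl
  | succ k ih => intro D; simp [gList, ih]

lemma gList_mem : ∀ (k : ℕ) (D : StarV h nb → StarV h nb) (m : StarV h nb → StarV h nb),
    m ∈ gList D k → ∃ D', m = gstep D' := by
  intro k
  induction k with
  | zero => intro D m hm; simp [gList] at hm
  | succ k ih =>
    intro D m hm
    rcases List.mem_cons.1 hm with rfl | hm'
    · exact ⟨D, rfl⟩
    · exact ih _ m hm'

lemma routeSeq_gList : ∀ (k : ℕ) (D : StarV h nb → StarV h nb),
    routeSeq D (gList D k) = iterD D k := by
  intro k
  induction k with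
  | zero => intro D; rfl
  | succ k ih =>
    intro D
    show routeSeq (fun v => D (gstep D v)) (gList (fun v => D (gstep D v)) k) = _
    rw [ih]
    rfl

lemma wd_iterD : ∀ (k : ℕ) (D : StarV h nb → StarV h nb) (b : Fin h),
    wd (iterD D k) b = wstep^[k] (wd D b) := by
  intro k
  induction k with
  | zero => intro D b; rfl
  | succ k ih =>
    intro D b
    show wd (iterD (fun v => D (gstep D v)) k) b = _
    rw [ih, wd_gstep, ← Function.iterate_succ_apply]

def phi (b : Fin h) : StarV h nb → ℕ
  | none => 0
  | some x => if x.1 = b then x.2.val + 1 else 0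

lemma phi_adj {b : Fin h} {u v : StarV h nb} (hadj : (subStar h nb).Adj u v) :
    phi b u ≤ phi b v + 1 ∧ phi b v ≤ phi b u + 1 := by
  rw [subStar, SimpleGraph.fromRel_adj] at hadj
  have key : ∀ x y : StarV h nb,
      ((∃ (c : Fin h) (hc : 0 < nb c), x = none ∧ y = some ⟨c, ⟨0, hc⟩⟩) ∨
       (∃ (c : Fin h) (i2 j2 : Fin (nb c)), x = some ⟨c, i2⟩ ∧ y = some ⟨c, j2⟩ ∧
        i2.val + 1 = j2.val)) → phi b x ≤ phi b y + 1 ∧ phi b y ≤ phi b x + 1 := by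
    rintro x y (⟨c, hc, rfl, rfl⟩ | ⟨c, i2, j2, rfl, rfl, hij⟩)
    · by_cases hcb : c = b <;> simp [phi, hcb]
    · by_cases hcb : c = b <;> simp [phi, hcb] <;> omega
  rcases hadj.2 with hr | hr
  · exact key u v hr
  · exact (key v u hr).symm.imp id id |>.symm.imp id id |>.symm
  
lemma phi_matching {m : StarV h nb → StarV h nb}
    (hm : IsMatchingPerm (subStar h nb) m) (b : Fin h) (v : StarV h nb) :
    phi b (m v) ≤ phi b v + 1 ∧ phi b v ≤ phi b (m v) + 1 := by
  rcases hm.2 v with he | ha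
  · rw [he]; omega
  · exact (phi_adj ha).symm.imp id id |>.symm.imp id id |>.symm

lemma phi_foldr (b : Fin h) : ∀ (L : List (StarV h nb → StarV h nb)),
    (∀ m ∈ L, IsMatchingPerm (subStar h nb) m) → ∀ v : StarV h nb,
    phi b (L.foldr (· ∘ ·) id v) ≤ phi b v + L.length ∧
    phi b v ≤ phi b (L.foldr (· ∘ ·) id v) + L.length := by
  intro L
  induction L with
  | nil => intro _ v; simp
  | cons m L ih =>
    intro hm v
    have h1 := ih (fun m' hm' => hm m' (List.mem_cons_of_mem _ hm')) v
    have h2 := phi_matching (hm m List.mem_cons_self) b (L.foldr (· ∘ ·) id v)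
    have he : (List.foldr (· ∘ ·) id (m :: L)) v = m (L.foldr (· ∘ ·) id v) := rfl
    rw [he]
    simp only [List.length_cons]
    omega

lemma bad_le_len (C : StarV h nb ≃ StarV h nb) (ms : List (StarV h nb → StarV h nb))
    (hms : Solves (subStar h nb) (⇑C) ms)
    (b : Fin h) (i : Fin (nb b)) (hbad : ¬ isGood b (C (some ⟨b, i⟩))) :
    i.val + 1 ≤ ms.length := by
  have hsol : ∀ v, C (ms.foldr (· ∘ ·) id v) = v := fun v => congrFun hms.2 v
  set T := C (some ⟨b, i⟩) with hT
  have hFT : ms.foldr (· ∘ ·) id T = some ⟨b, i⟩ := by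
    apply C.injective
    rw [hsol T]
  have hphiT : phi b T = 0 := by
    rcases hT2 : T with _ | ⟨c, i'⟩
    · rfl
    · have hcb : ¬ (c = b) := by
        rintro rfl
        exact hbad ⟨i', hT2⟩
      simp [phi, hcb]
  have hl := (phi_foldr b ms hms.1 T).1
  rw [hFT] at hl
  have hFTv : phi b (some ⟨b, i⟩ : StarV h nb) = i.val + 1 := by simp [phi]
  omega

end S19

/-- on a subdivided star, if the instance `(G, C)` has a solution of length
`k`, then there is a sequence of at most `k` matchings, none containing an edge incident
to the center `v₀`, routing `C` to some branch-sorted configuration. -/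
theorem stmt_19 (h : ℕ) (hh : 3 ≤ h) (nb : Fin h → ℕ) (hnb : ∀ b, 1 ≤ nb b)
    (C : StarV h nb ≃ StarV h nb) (ms : List (StarV h nb → StarV h nb))
    (hms : Solves (subStar h nb) (⇑C) ms) :
    ∃ ms' : List (StarV h nb → StarV h nb),
      ms'.length ≤ ms.length ∧
      (∀ m ∈ ms', IsMatchingPerm (subStar h nb) m ∧ m none = none) ∧
      BranchSorted (routeSeq (⇑C) ms') := by
  classical
  set k := ms.length with hk
  refine ⟨S19.gList (⇑C) k, (S19.gList_length k (⇑C)).le, ?_, ?_⟩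
  · intro m hm
    obtain ⟨D', rfl⟩ := S19.gList_mem k (⇑C) m hm
    exact ⟨S19.gstep_matching D', rfl⟩
  · intro b i j hij hgood
    rw [S19.routeSeq_gList k (⇑C)] at hgood ⊢
    set E := S19.iterD (⇑C) k with hE
    by_contra hbadj
    set w0 := S19.wd (⇑C) b with hw0
    have hw : S19.wd E b = S19.wstep^[k] w0 := S19.wd_iterD k (⇑C) b
    have supp0 : ∀ p, k < p → ¬ w0 p := by
      intro p hp hwp
      obtain ⟨hp1, hlt, hf⟩ := hwp
      have h2 : p - 1 + 1 ≤ ms.length :=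
        S19.bad_le_len C ms hms b ⟨p - 1, hlt⟩ (hf hlt)
      omega
    have hq : (S19.wstep^[k] w0) (j.val + 1) := by
      rw [← hw]
      refine ⟨by omega, j.isLt, fun hj hg => ?_⟩
      exact hbadj hg
    have hqk : j.val + 1 ≤ k := by
      by_contra hgt
      exact S19.supp_iter w0 k supp0 k (j.val + 1) (by omega) hq
    have hstab : S19.cnt (S19.wstep^[k] w0) k = S19.cnt w0 k :=
      S19.cnt_iter_stable w0 k supp0 k
    have hmono : S19.cnt (S19.wstep^[k] w0) (j.val + 1) ≤ S19.cnt (S19.wstep^[k] w0) k :=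
      S19.cnt_mono _ hqk
    have hcq : S19.cnt (S19.wstep^[k] w0) (j.val + 1)
        = S19.cnt (S19.wstep^[k] w0) j.val + 1 := by
      rw [S19.cnt, if_pos hq]
    have hs := S19.sorted_after w0 k supp0 j.val
    have hfull : j.val ≤ S19.cnt (S19.wstep^[k] w0) j.val := by omega
    have hij' : i.val < j.val := Fin.lt_def.mp hij
    have hwi := S19.cnt_full _ j.val hfull (i.val + 1) (by omega) (by omega)
    rw [← hw] at hwi
    obtain ⟨-, hlt2, hf2⟩ := hwi
    exact hf2 hlt2 hgood
end
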